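/- arXiv:1402.4087 — 4 statements merged into one kernel-verified Lean document; each statement's English description precedes it below -/
import Mathlib

section
/- Let L be a second-order Lagrangian and φ : ℝ^m → ℝ^n a smooth map. Suppose smooth functions p^i_α, p^I_α : ℝ^m → ℝ (1 ≤ i ≤ m, |I| = 2, 1 ≤ α ≤ n) satisfy, everywhere on ℝ^m: p^I_α = (∂L/∂u^α_I) ∘ j²φ, and Σ_{j=1}^m (1/n(ij)) ∂p^{1_i+1_j}_α/∂x^j + p^i_α − (∂L/∂u^α_i) ∘ j²φ = 0. Then necessarily p^i_α = [∂L/∂u^α_i − Σ_{j=1}^m (1/n(ij)) D_j(∂L/∂u^α_{1_i+1_j})] ∘ j³φ; that is, the momenta coincide with the components of the restricted Legendre map FL of L evaluated along j³φ, so they are uniquely determined by φ. -/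
open scoped BigOperators

noncomputable section

/-- Multi-indices on `Fin m` of total degree `k`. -/
abbrev Idx (m k : ℕ) : Type := { I : Fin m → ℕ // ∑ i, I i = k }

instance (m k : ℕ) : Fintype (Idx m k) :=
  Fintype.subtype (Finset.Nat.antidiagonalTuple m k) fun _ =>
    Finset.Nat.mem_antidiagonalTuple

/-- The multi-index `1_i + 1_j`. -/
def idx2 {m : ℕ} (i j : Fin m) : Idx m 2 :=
  ⟨Pi.single i 1 + Pi.single j 1, by
    simp [Finset.sum_add_distrib, Finset.sum_pi_single']⟩

/-- The multi-index `I + 1_j`. -/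
def Idx.succ {m k : ℕ} (I : Idx m k) (j : Fin m) : Idx m (k + 1) :=
  ⟨I.1 + Pi.single j 1, by
    simp [Finset.sum_add_distrib, I.2, Finset.sum_pi_single']⟩

/-- The combinatorial factor `n(ij)`. -/
def nij {m : ℕ} (i j : Fin m) : ℝ := if i = j then 1 else 2

/-- Partial derivative of `f : ℝ^m → ℝ` in the `i`-th coordinate direction. -/
def pd {m : ℕ} (i : Fin m) (f : (Fin m → ℝ) → ℝ) : (Fin m → ℝ) → ℝ :=
  fun x => fderiv ℝ f x (Pi.single i 1)

/-- Iterated partial derivative `∂^I` associated to a multi-index `I`. -/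
def pdI {m : ℕ} (I : Fin m → ℕ) (f : (Fin m → ℝ) → ℝ) : (Fin m → ℝ) → ℝ :=
  (List.finRange m).foldr (fun i g => (pd i)^[I i] g) f

/-- Second-order jet coordinate space: coordinates `(xⁱ, uᵅ, uᵅᵢ, uᵅ_I)`, `|I| = 2`. -/
abbrev J2 (m n : ℕ) : Type :=
  (Fin m → ℝ) × (Fin n → ℝ) × (Fin m → Fin n → ℝ) × (Idx m 2 → Fin n → ℝ)

/-- Third-order jet coordinate space: additionally `uᵅ_J`, `|J| = 3`. -/
abbrev J3 (m n : ℕ) : Type :=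
  (Fin m → ℝ) × (Fin n → ℝ) × (Fin m → Fin n → ℝ) × (Idx m 2 → Fin n → ℝ) ×
    (Idx m 3 → Fin n → ℝ)

/-- Projection from third-order to second-order jet coordinates. -/
def π32 {m n : ℕ} (w : J3 m n) : J2 m n := (w.1, w.2.1, w.2.2.1, w.2.2.2.1)

/-- Second jet prolongation of `φ : ℝ^m → ℝ^n`. -/
def jet2 {m n : ℕ} (φ : (Fin m → ℝ) → Fin n → ℝ) (x : Fin m → ℝ) : J2 m n :=
  (x, φ x, fun i α => pd i (fun y => φ y α) x, fun I α => pdI I.1 (fun y => φ y α) x)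

/-- Third jet prolongation of `φ : ℝ^m → ℝ^n`. -/
def jet3 {m n : ℕ} (φ : (Fin m → ℝ) → Fin n → ℝ) (x : Fin m → ℝ) : J3 m n :=
  (x, φ x, fun i α => pd i (fun y => φ y α) x,
    fun I α => pdI I.1 (fun y => φ y α) x,
    fun J α => pdI J.1 (fun y => φ y α) x)

/-- Coordinate direction `∂/∂xʲ` in `J2`. -/
def eX {m n : ℕ} (j : Fin m) : J2 m n := (Pi.single j 1, 0, 0, 0)
/-- Coordinate direction `∂/∂uᵅ` in `J2`. -/
def eU {m n : ℕ} (α : Fin n) : J2 m n := (0, Pi.single α 1, 0, 0)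
/-- Coordinate direction `∂/∂uᵅᵢ` in `J2`. -/
def eU1 {m n : ℕ} (i : Fin m) (α : Fin n) : J2 m n :=
  (0, 0, Pi.single i (Pi.single α 1), 0)
/-- Coordinate direction `∂/∂uᵅ_I` in `J2`. -/
def eU2 {m n : ℕ} (I : Idx m 2) (α : Fin n) : J2 m n :=
  (0, 0, 0, Pi.single I (Pi.single α 1))

/-- Partial derivative `∂G/∂xʲ` of a function of the second-order jet coordinates. -/
def dX {m n : ℕ} (j : Fin m) (G : J2 m n → ℝ) : J2 m n → ℝ :=
  fun a => fderiv ℝ G a (eX j)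
/-- Partial derivative `∂G/∂uᵅ`. -/
def dU {m n : ℕ} (α : Fin n) (G : J2 m n → ℝ) : J2 m n → ℝ :=
  fun a => fderiv ℝ G a (eU α)
/-- Partial derivative `∂G/∂uᵅᵢ`. -/
def dU1 {m n : ℕ} (i : Fin m) (α : Fin n) (G : J2 m n → ℝ) : J2 m n → ℝ :=
  fun a => fderiv ℝ G a (eU1 i α)
/-- Partial derivative `∂G/∂uᵅ_I`, `|I| = 2`. -/
def dU2 {m n : ℕ} (I : Idx m 2) (α : Fin n) (G : J2 m n → ℝ) : J2 m n → ℝ :=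
  fun a => fderiv ℝ G a (eU2 I α)

/-- Coordinate total derivative `D_j G`, a function of the third-order jet coordinates. -/
def totalD {m n : ℕ} (j : Fin m) (G : J2 m n → ℝ) : J3 m n → ℝ := fun w =>
  dX j G (π32 w) + (∑ α, w.2.2.1 j α * dU α G (π32 w))
    + (∑ α, ∑ i, w.2.2.2.1 (idx2 i j) α * dU1 i α G (π32 w))
    + (∑ α, ∑ I : Idx m 2, w.2.2.2.2 (Idx.succ I j) α * dU2 I α G (π32 w))

/-- The first-order momentum components `pⁱᵅ` of the restricted Legendre map. -/
def FLp1 {m n : ℕ} (L : J2 m n → ℝ) (i : Fin m) (α : Fin n) : J3 m n → ℝ := fun w =>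
  dU1 i α L (π32 w) - ∑ j, (nij i j)⁻¹ * totalD j (dU2 (idx2 i j) α L) w

/-- Euler–Lagrange expression of a second-order Lagrangian `L` at `φ`. -/
def EL {m n : ℕ} (L : J2 m n → ℝ) (φ : (Fin m → ℝ) → Fin n → ℝ) (α : Fin n) :
    (Fin m → ℝ) → ℝ := fun x =>
  dU α L (jet2 φ x)
    - (∑ i, pd i (fun y => dU1 i α L (jet2 φ y)) x)
    + ∑ I : Idx m 2, pdI I.1 (fun y => dU2 I α L (jet2 φ y)) x

section AuxLemmas

variable {m n : ℕ}

lemma contDiff_fderiv_apply {E : Type*} [NormedAddCommGroup E] [NormedSpace ℝ E]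
    {f : E → ℝ} (hf : ContDiff ℝ (⊤ : ℕ∞) f) (v : E) :
    ContDiff ℝ (⊤ : ℕ∞) (fun x => fderiv ℝ f x v) :=
  (hf.fderiv_right (by simp)).clm_apply contDiff_const

lemma pd_contDiff {f : (Fin m → ℝ) → ℝ} (hf : ContDiff ℝ (⊤ : ℕ∞) f) (i : Fin m) :
    ContDiff ℝ (⊤ : ℕ∞) (pd i f) := contDiff_fderiv_apply hf _

lemma pd_swap {f : (Fin m → ℝ) → ℝ} (hf : ContDiff ℝ (⊤ : ℕ∞) f) (i j : Fin m) :
    pd i (pd j f) = pd j (pd i f) := by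
  funext x
  have hd : Differentiable ℝ f := hf.differentiable (by simp)
  have h1 : ∀ y, HasFDerivAt f (fderiv ℝ f y) y := fun y => (hd y).hasFDerivAt
  have hf' : ContDiff ℝ (⊤ : ℕ∞) (fderiv ℝ f) := hf.fderiv_right (by simp)
  have h2 : HasFDerivAt (fderiv ℝ f) (fderiv ℝ (fderiv ℝ f) x) x :=
    (hf'.differentiable (by simp) x).hasFDerivAt
  have key := second_derivative_symmetric h1 h2 (Pi.single i 1) (Pi.single j 1)
  have eval : ∀ (v w : Fin m → ℝ),
      fderiv ℝ (fun y => fderiv ℝ f y v) x w = fderiv ℝ (fderiv ℝ f) x w v := by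
    intro v w
    rw [fderiv_clm_apply (hf'.differentiable (by simp) x)
      (differentiableAt_const v)]
    simp
  show fderiv ℝ (fun y => fderiv ℝ f y (Pi.single j 1)) x (Pi.single i 1)
      = fderiv ℝ (fun y => fderiv ℝ f y (Pi.single i 1)) x (Pi.single j 1)
  rw [eval, eval, key]

end AuxLemmas
section AuxLemmas2

variable {m n : ℕ}

lemma pd_iter_contDiff {f : (Fin m → ℝ) → ℝ} (hf : ContDiff ℝ (⊤ : ℕ∞) f)
    (i : Fin m) (k : ℕ) : ContDiff ℝ (⊤ : ℕ∞) ((pd i)^[k] f) := by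
  induction k with
  | zero => exact hf
  | succ k ih => rw [Function.iterate_succ_apply']; exact pd_contDiff ih i

lemma pd_swap_iter {f : (Fin m → ℝ) → ℝ} (hf : ContDiff ℝ (⊤ : ℕ∞) f)
    (i j : Fin m) (k : ℕ) : pd j ((pd i)^[k] f) = (pd i)^[k] (pd j f) := by
  induction k with
  | zero => rfl
  | succ k ih =>
    rw [Function.iterate_succ_apply', Function.iterate_succ_apply',
      pd_swap (pd_iter_contDiff hf i k) j i, ih]

lemma foldr_contDiff (I : Fin m → ℕ) {f : (Fin m → ℝ) → ℝ}
    (hf : ContDiff ℝ (⊤ : ℕ∞) f) (l : List (Fin m)) :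
    ContDiff ℝ (⊤ : ℕ∞) (l.foldr (fun i g => (pd i)^[I i] g) f) := by
  induction l with
  | nil => exact hf
  | cons i t ih => exact pd_iter_contDiff ih i (I i)

lemma pdI_contDiff (I : Fin m → ℕ) {f : (Fin m → ℝ) → ℝ}
    (hf : ContDiff ℝ (⊤ : ℕ∞) f) : ContDiff ℝ (⊤ : ℕ∞) (pdI I f) :=
  foldr_contDiff I hf _

lemma foldr_congr' {α β : Type*} {step step' : α → β → β} (b : β) (l : List α)
    (h : ∀ a ∈ l, step a = step' a) : l.foldr step b = l.foldr step' b := by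
  induction l with
  | nil => rfl
  | cons a t ih =>
    simp only [List.foldr_cons, h a List.mem_cons_self,
      ih fun a ha => h a (List.mem_cons_of_mem _ ha)]

lemma pd_foldr (I : Fin m → ℕ) (j : Fin m) {f : (Fin m → ℝ) → ℝ}
    (hf : ContDiff ℝ (⊤ : ℕ∞) f) :
    ∀ l : List (Fin m), l.Nodup → j ∈ l →
      pd j (l.foldr (fun i g => (pd i)^[I i] g) f)
        = l.foldr (fun i g => (pd i)^[((I + Pi.single j 1 : Fin m → ℕ) i)] g) f := by
  intro l
  induction l with
  | nil => simp
  | cons i t ih =>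
    intro hnd hmem
    simp only [List.foldr_cons]
    rcases eq_or_ne i j with rfl | hij
    · have hjt : i ∉ t := (List.nodup_cons.1 hnd).1
      have ht : t.foldr (fun i' g => (pd i')^[((I + Pi.single i 1 : Fin m → ℕ) i')] g) f
          = t.foldr (fun i' g => (pd i')^[I i'] g) f := by
        apply foldr_congr'
        intro a ha
        have : a ≠ i := fun h => hjt (h ▸ ha)
        simp [Pi.single_eq_of_ne this]
      rw [ht, Pi.add_apply, Pi.single_eq_same, Function.iterate_add_apply]
      exact pd_swap_iter (foldr_contDiff I hf t) i i (I i)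
    · have hjt : j ∈ t := by
        rcases List.mem_cons.1 hmem with h | h
        · exact absurd h.symm hij
        · exact h
      rw [pd_swap_iter (foldr_contDiff I hf t) i j (I i),
        ih (List.nodup_cons.1 hnd).2 hjt,
        show ((I + Pi.single j 1 : Fin m → ℕ) i) = I i by simp [Pi.single_eq_of_ne hij]]

lemma pd_pdI (I : Fin m → ℕ) (j : Fin m) {f : (Fin m → ℝ) → ℝ}
    (hf : ContDiff ℝ (⊤ : ℕ∞) f) :
    pd j (pdI I f) = pdI (I + Pi.single j 1) f :=
  pd_foldr I j hf _ (List.nodup_finRange m) (List.mem_finRange j)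

lemma pdI_zero {f : (Fin m → ℝ) → ℝ} : pdI (0 : Fin m → ℕ) f = f := by
  show (List.finRange m).foldr _ f = f
  induction List.finRange m with
  | nil => rfl
  | cons i t ih => simp only [List.foldr_cons, Pi.zero_apply, Function.iterate_zero, id]; exact ih

lemma pdI_single {f : (Fin m → ℝ) → ℝ} (hf : ContDiff ℝ (⊤ : ℕ∞) f) (i : Fin m) :
    pdI (Pi.single i 1) f = pd i f := by
  have := pd_pdI (0 : Fin m → ℕ) i hf
  rw [pdI_zero, zero_add] at this
  exact this.symm

end AuxLemmas2
section AuxLemmas3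

variable {m n : ℕ}

lemma sum_single_smul {ι : Type*} [Fintype ι] [DecidableEq ι] (g : ι → ℝ) :
    (∑ i, g i • (Pi.single i (1 : ℝ) : ι → ℝ)) = g := by
  funext k
  simp [Finset.sum_apply, Pi.single_apply]

lemma sum_single_smul2 {ι κ : Type*} [Fintype ι] [DecidableEq ι] [Fintype κ]
    [DecidableEq κ] (g : ι → κ → ℝ) :
    (∑ i, ∑ α, g i α • (Pi.single i (Pi.single α (1:ℝ)) : ι → κ → ℝ)) = g := by
  funext k β
  simp [Finset.sum_apply, Pi.single_apply, apply_ite (fun f : κ → ℝ => f β)]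

lemma J2_decomp (v : J2 m n) :
    v = (∑ j, v.1 j • (eX j : J2 m n)) + (∑ α, v.2.1 α • eU α)
      + (∑ i, ∑ α, v.2.2.1 i α • eU1 i α)
      + (∑ I, ∑ α, v.2.2.2 I α • eU2 I α) := by
  refine Prod.ext ?_ (Prod.ext ?_ (Prod.ext ?_ ?_))
  · simp only [eX, eU, eU1, eU2, Prod.fst_sum, Prod.fst_add, Prod.smul_fst,
      Finset.sum_const_zero, smul_zero, add_zero]
    exact (sum_single_smul v.1).symm
  · simp only [eX, eU, eU1, eU2, Prod.fst_sum, Prod.snd_sum, Prod.fst_add, Prod.snd_add,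
      Prod.smul_fst, Prod.smul_snd, Finset.sum_const_zero, smul_zero, add_zero, zero_add]
    exact (sum_single_smul v.2.1).symm
  · simp only [eX, eU, eU1, eU2, Prod.fst_sum, Prod.snd_sum, Prod.fst_add, Prod.snd_add,
      Prod.smul_fst, Prod.smul_snd, Finset.sum_const_zero, smul_zero, add_zero, zero_add]
    exact (sum_single_smul2 v.2.2.1).symm
  · simp only [eX, eU, eU1, eU2, Prod.fst_sum, Prod.snd_sum, Prod.fst_add, Prod.snd_add,
      Prod.smul_fst, Prod.smul_snd, Finset.sum_const_zero, smul_zero, add_zero, zero_add]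
    exact (sum_single_smul2 v.2.2.2).symm

lemma fderiv_J2_eval {G : J2 m n → ℝ} {a : J2 m n} (v : J2 m n) :
    fderiv ℝ G a v = (∑ j, v.1 j * dX j G a) + (∑ α, v.2.1 α * dU α G a)
      + (∑ i, ∑ α, v.2.2.1 i α * dU1 i α G a)
      + (∑ I, ∑ α, v.2.2.2 I α * dU2 I α G a) := by
  conv_lhs => rw [J2_decomp v]
  simp [dX, dU, dU1, dU2, smul_eq_mul]

end AuxLemmas3
section AuxLemmas4

variable {m n : ℕ}

lemma clm_fderiv_apply {E F G' : Type*} [NormedAddCommGroup E] [NormedSpace ℝ E]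
    [NormedAddCommGroup F] [NormedSpace ℝ F] [NormedAddCommGroup G'] [NormedSpace ℝ G']
    (ℓ : F →L[ℝ] G') {f : E → F} {g : E → G'} (hg : ∀ y, ℓ (f y) = g y) {x : E}
    (hf : DifferentiableAt ℝ f x) (v : E) :
    ℓ (fderiv ℝ f x v) = fderiv ℝ g x v := by
  have h := (ℓ.hasFDerivAt.comp x hf.hasFDerivAt).fderiv
  have hfg : ℓ ∘ f = g := funext hg
  rw [hfg] at h
  rw [h]
  rfl

lemma jet2_differentiable {φ : (Fin m → ℝ) → Fin n → ℝ} (hφ : ContDiff ℝ (⊤ : ℕ∞) φ) :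
    Differentiable ℝ (jet2 (m := m) (n := n) φ) := by
  have hφα : ∀ α, ContDiff ℝ (⊤ : ℕ∞) (fun y => φ y α) := fun α => (contDiff_pi.1 hφ) α
  refine Differentiable.prodMk differentiable_id (Differentiable.prodMk
    (hφ.differentiable (by simp)) (Differentiable.prodMk ?_ ?_))
  · exact differentiable_pi'' fun i => differentiable_pi'' fun α =>
      (pd_contDiff (hφα α) i).differentiable (by simp)
  · exact differentiable_pi'' fun I => differentiable_pi'' fun α =>
      (pdI_contDiff I.1 (hφα α)).differentiable (by simp)

lemma pd_comp_jet2 {G : J2 m n → ℝ} (hG : ContDiff ℝ (⊤ : ℕ∞) G)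
    {φ : (Fin m → ℝ) → Fin n → ℝ} (hφ : ContDiff ℝ (⊤ : ℕ∞) φ)
    (j : Fin m) (x : Fin m → ℝ) :
    pd j (fun y => G (jet2 φ y)) x = totalD j G (jet3 φ x) := by
  have hφα : ∀ α, ContDiff ℝ (⊤ : ℕ∞) (fun y => φ y α) := fun α => (contDiff_pi.1 hφ) α
  have hGd : DifferentiableAt ℝ G (jet2 φ x) := (hG.differentiable (by simp)) _
  have hjd : DifferentiableAt ℝ (jet2 (m := m) (n := n) φ) x := jet2_differentiable hφ x
  have hcomp : pd j (fun y => G (jet2 φ y)) x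
      = fderiv ℝ G (jet2 φ x) (fderiv ℝ (jet2 φ) x (Pi.single j 1)) := by
    show fderiv ℝ (G ∘ jet2 φ) x (Pi.single j 1) = _
    rw [fderiv_comp x hGd hjd]
    rfl
  set tj := fderiv ℝ (jet2 (m := m) (n := n) φ) x (Pi.single j 1) with htj
  have htj1 : tj.1 = Pi.single j 1 := by
    have := clm_fderiv_apply (ContinuousLinearMap.fst ℝ (Fin m → ℝ)
        ((Fin n → ℝ) × (Fin m → Fin n → ℝ) × (Idx m 2 → Fin n → ℝ)))
      (f := jet2 φ) (g := fun y => y) (fun y => rfl) hjd (Pi.single j 1)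
    rw [fderiv_id'] at this
    exact this
  have htj2 : ∀ α, tj.2.1 α = pd j (fun y => φ y α) x := by
    intro α
    exact clm_fderiv_apply
      ((ContinuousLinearMap.proj α).comp ((ContinuousLinearMap.fst ℝ _ _).comp
        (ContinuousLinearMap.snd ℝ (Fin m → ℝ) _)))
      (f := jet2 φ) (g := fun y => φ y α) (fun y => rfl) hjd (Pi.single j 1)
  have htj3 : ∀ (i : Fin m) (α : Fin n),
      tj.2.2.1 i α = pd j (pd i (fun y => φ y α)) x := by
    intro i α
    exact clm_fderiv_apply
      ((ContinuousLinearMap.proj α).comp ((ContinuousLinearMap.proj i).comp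
        ((ContinuousLinearMap.fst ℝ (Fin m → Fin n → ℝ) (Idx m 2 → Fin n → ℝ)).comp
          ((ContinuousLinearMap.snd ℝ (Fin n → ℝ)
            ((Fin m → Fin n → ℝ) × (Idx m 2 → Fin n → ℝ))).comp
            (ContinuousLinearMap.snd ℝ (Fin m → ℝ)
              ((Fin n → ℝ) × (Fin m → Fin n → ℝ) × (Idx m 2 → Fin n → ℝ)))))))
      (f := jet2 φ) (g := pd i (fun y => φ y α)) (fun y => rfl) hjd (Pi.single j 1)
  have htj4 : ∀ (I : Idx m 2) (α : Fin n),
      tj.2.2.2 I α = pd j (pdI I.1 (fun y => φ y α)) x := by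
    intro I α
    exact clm_fderiv_apply
      ((ContinuousLinearMap.proj α).comp ((ContinuousLinearMap.proj I).comp
        ((ContinuousLinearMap.snd ℝ (Fin m → Fin n → ℝ) (Idx m 2 → Fin n → ℝ)).comp
          ((ContinuousLinearMap.snd ℝ (Fin n → ℝ)
            ((Fin m → Fin n → ℝ) × (Idx m 2 → Fin n → ℝ))).comp
            (ContinuousLinearMap.snd ℝ (Fin m → ℝ)
              ((Fin n → ℝ) × (Fin m → Fin n → ℝ) × (Idx m 2 → Fin n → ℝ)))))))
      (f := jet2 φ) (g := pdI I.1 (fun y => φ y α)) (fun y => rfl) hjd (Pi.single j 1)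
  have key3 : ∀ (i : Fin m) (α : Fin n),
      pd j (pd i (fun y => φ y α)) x = pdI (idx2 i j).1 (fun y => φ y α) x := by
    intro i α
    have h1 : pd i (fun y => φ y α) = pdI (Pi.single i 1) (fun y => φ y α) :=
      (pdI_single (hφα α) i).symm
    rw [h1, pd_pdI _ j (hφα α)]
    rfl
  have key4 : ∀ (I : Idx m 2) (α : Fin n),
      pd j (pdI I.1 (fun y => φ y α)) x = pdI (Idx.succ I j).1 (fun y => φ y α) x := by
    intro I α
    rw [pd_pdI _ j (hφα α)]
    rfl
  rw [hcomp, fderiv_J2_eval tj]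
  have e1 : (∑ k, tj.1 k * dX k G (jet2 φ x)) = dX j G (jet2 φ x) := by
    rw [htj1]
    simp [Pi.single_apply]
  have e3 : (∑ i, ∑ α, tj.2.2.1 i α * dU1 i α G (jet2 φ x))
      = ∑ α, ∑ i, pdI (idx2 i j).1 (fun y => φ y α) x * dU1 i α G (jet2 φ x) := by
    rw [Finset.sum_comm]
    exact Finset.sum_congr rfl fun α _ => Finset.sum_congr rfl fun i _ => by
      rw [htj3, key3]
  have e4 : (∑ I, ∑ α, tj.2.2.2 I α * dU2 I α G (jet2 φ x))
      = ∑ α, ∑ I : Idx m 2, pdI (Idx.succ I j).1 (fun y => φ y α) x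
          * dU2 I α G (jet2 φ x) := by
    rw [Finset.sum_comm]
    exact Finset.sum_congr rfl fun α _ => Finset.sum_congr rfl fun I _ => by
      rw [htj4, key4]
  rw [e1, e3, e4]
  simp only [htj2]
  rfl

end AuxLemmas4

/-- the momenta satisfying the unified field equations along `j³φ` are
uniquely determined: they coincide with the components of the restricted Legendre map. -/
theorem statement3 (m n : ℕ) (L : J2 m n → ℝ) (hL : ContDiff ℝ (⊤ : ℕ∞) L)
    (φ : (Fin m → ℝ) → Fin n → ℝ) (hφ : ContDiff ℝ (⊤ : ℕ∞) φ)
    (p1 : Fin m → Fin n → (Fin m → ℝ) → ℝ)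
    (p2 : Idx m 2 → Fin n → (Fin m → ℝ) → ℝ)
    (hp1 : ∀ i α, ContDiff ℝ (⊤ : ℕ∞) (p1 i α))
    (hp2 : ∀ I α, ContDiff ℝ (⊤ : ℕ∞) (p2 I α))
    (hmom : ∀ (I : Idx m 2) (α : Fin n) (x : Fin m → ℝ),
      p2 I α x = dU2 I α L (jet2 φ x))
    (hrel : ∀ (i : Fin m) (α : Fin n) (x : Fin m → ℝ),
      (∑ j, (nij i j)⁻¹ * pd j (p2 (idx2 i j) α) x) + p1 i α x
        - dU1 i α L (jet2 φ x) = 0) :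
    ∀ (i : Fin m) (α : Fin n) (x : Fin m → ℝ),
      p1 i α x = FLp1 L i α (jet3 φ x) := by
  intro i α x
  have hG : ∀ j : Fin m, ContDiff ℝ (⊤ : ℕ∞) (dU2 (idx2 i j) α L) := fun j =>
    contDiff_fderiv_apply hL _
  have hpd : ∀ j : Fin m,
      pd j (p2 (idx2 i j) α) x = totalD j (dU2 (idx2 i j) α L) (jet3 φ x) := by
    intro j
    rw [show p2 (idx2 i j) α = fun y => dU2 (idx2 i j) α L (jet2 φ y) from
      funext fun y => hmom _ _ y]
    exact pd_comp_jet2 (hG j) hφ j x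
  have hFL : FLp1 L i α (jet3 φ x) = dU1 i α L (jet2 φ x)
      - ∑ j, (nij i j)⁻¹ * totalD j (dU2 (idx2 i j) α L) (jet3 φ x) := rfl
  have hsum : (∑ j, (nij i j)⁻¹ * totalD j (dU2 (idx2 i j) α L) (jet3 φ x))
      = ∑ j, (nij i j)⁻¹ * pd j (p2 (idx2 i j) α) x :=
    Finset.sum_congr rfl fun j _ => by rw [hpd j]
  rw [hFL, hsum]
  linarith [hrel i α x]
end
end

section
/- Let L be a second-order Lagrangian and FL its restricted Legendre map. If the total derivative of FL at a point a of the third-order jet coordinate space is surjective (i.e., FL is a submersion at a), then the Hessian matrix (∂²L/∂u^α_I ∂u^β_K)_{|I|=|K|=2, 1≤α,β≤n}, evaluated at the second-order jet coordinates underlying a, is invertible. -/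
open scoped BigOperators

noncomputable section

/-- Restricted 2-symmetric multimomentum coordinates `(xⁱ, uᵅ, uᵅᵢ, pⁱᵅ, p^Iᵅ)`. -/
abbrev Mom (m n : ℕ) : Type :=
  (Fin m → ℝ) × (Fin n → ℝ) × (Fin m → Fin n → ℝ) × (Fin m → Fin n → ℝ) ×
    (Idx m 2 → Fin n → ℝ)

/-- The restricted Legendre map `FL : J³π → J²π^‡`. -/
def FLmap {m n : ℕ} (L : J2 m n → ℝ) : J3 m n → Mom m n := fun w =>
  (w.1, w.2.1, w.2.2.1, fun i α => FLp1 L i α w, fun I α => dU2 I α L (π32 w))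

/-- The Hessian matrix `(∂²L/∂uᵅ_I ∂uᵝ_K)` of `L` with respect to the highest-order
velocities, at a point of the second-order jet coordinate space. -/
def Hess {m n : ℕ} (L : J2 m n → ℝ) (b : J2 m n) :
    Matrix (Idx m 2 × Fin n) (Idx m 2 × Fin n) ℝ :=
  Matrix.of fun p q => fderiv ℝ (dU2 q.1 q.2 L) b (eU2 p.1 p.2)


section AuxProof
variable {m n : ℕ}

lemma contDiff_pderiv {E : Type*} [NormedAddCommGroup E] [NormedSpace ℝ E]
    {G : E → ℝ} (hG : ContDiff ℝ (⊤:ℕ∞) G) (v : E) :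
    ContDiff ℝ (⊤:ℕ∞) (fun x => fderiv ℝ G x v) :=
  (ContinuousLinearMap.apply ℝ ℝ v).contDiff.comp (hG.fderiv_right (by simp))

lemma contDiff_dX (j : Fin m) {G : J2 m n → ℝ} (hG : ContDiff ℝ (⊤:ℕ∞) G) :
    ContDiff ℝ (⊤:ℕ∞) (dX j G) := contDiff_pderiv hG _

lemma contDiff_dU (α : Fin n) {G : J2 m n → ℝ} (hG : ContDiff ℝ (⊤:ℕ∞) G) :
    ContDiff ℝ (⊤:ℕ∞) (dU α G) := contDiff_pderiv hG _

lemma contDiff_dU1 (i : Fin m) (α : Fin n) {G : J2 m n → ℝ} (hG : ContDiff ℝ (⊤:ℕ∞) G) :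
    ContDiff ℝ (⊤:ℕ∞) (dU1 i α G) := contDiff_pderiv hG _

lemma contDiff_dU2 (I : Idx m 2) (α : Fin n) {G : J2 m n → ℝ} (hG : ContDiff ℝ (⊤:ℕ∞) G) :
    ContDiff ℝ (⊤:ℕ∞) (dU2 I α G) := contDiff_pderiv hG _

def π32L (m n : ℕ) : J3 m n →L[ℝ] J2 m n :=
  (ContinuousLinearMap.fst ℝ _ _).prod <|
    ((ContinuousLinearMap.fst ℝ _ _).comp (ContinuousLinearMap.snd ℝ _ _)).prod <|
      (((ContinuousLinearMap.fst ℝ _ _).comp (ContinuousLinearMap.snd ℝ _ _)).comp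
          (ContinuousLinearMap.snd ℝ _ _)).prod
        ((((ContinuousLinearMap.fst ℝ _ _).comp (ContinuousLinearMap.snd ℝ _ _)).comp
            (ContinuousLinearMap.snd ℝ _ _)).comp (ContinuousLinearMap.snd ℝ _ _))

lemma contDiff_π32 : ContDiff ℝ (⊤:ℕ∞) (π32 : J3 m n → J2 m n) := (π32L m n).contDiff

lemma contDiff_totalD (j : Fin m) {G : J2 m n → ℝ} (hG : ContDiff ℝ (⊤:ℕ∞) G) :
    ContDiff ℝ (⊤:ℕ∞) (totalD j G) := by
  have h1 := contDiff_dX (n := n) j hG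
  have h2 := fun α => contDiff_dU (m := m) α hG
  have h3 := fun i α => contDiff_dU1 i α hG
  have h4 := fun I α => contDiff_dU2 I α hG
  have hπ : ContDiff ℝ (⊤:ℕ∞) (π32 : J3 m n → J2 m n) := contDiff_π32
  unfold totalD
  refine ContDiff.add (ContDiff.add (ContDiff.add ?_ ?_) ?_) ?_
  · exact h1.comp hπ
  · exact ContDiff.sum fun α _ => by have := h2 α; fun_prop
  · exact ContDiff.sum fun α _ => ContDiff.sum fun i _ => by have := h3 i α; fun_prop
  · exact ContDiff.sum fun α _ => ContDiff.sum fun I _ => by have := h4 I α; fun_prop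

lemma contDiff_FLp1 {L : J2 m n → ℝ} (hL : ContDiff ℝ (⊤:ℕ∞) L) (i : Fin m) (α : Fin n) :
    ContDiff ℝ (⊤:ℕ∞) (FLp1 L i α) := by
  unfold FLp1
  refine ContDiff.sub ((contDiff_dU1 i α hL).comp contDiff_π32) ?_
  exact ContDiff.sum fun j _ =>
    contDiff_const.mul (contDiff_totalD j (contDiff_dU2 _ α hL))

lemma contDiff_FLmap {L : J2 m n → ℝ} (hL : ContDiff ℝ (⊤:ℕ∞) L) :
    ContDiff ℝ (⊤:ℕ∞) (FLmap L) := by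
  unfold FLmap
  refine ContDiff.prodMk (by fun_prop) (ContDiff.prodMk (by fun_prop)
    (ContDiff.prodMk (by fun_prop) (ContDiff.prodMk ?_ ?_)))
  · exact contDiff_pi.2 fun i => contDiff_pi.2 fun α => contDiff_FLp1 hL i α
  · exact contDiff_pi.2 fun I => contDiff_pi.2 fun α =>
      (contDiff_dU2 I α hL).comp contDiff_π32

lemma hdecomp {m n : ℕ} (c : Idx m 2 → Fin n → ℝ) :
    ((0, 0, 0, c) : J2 m n) = ∑ p : Idx m 2 × Fin n, c p.1 p.2 • eU2 p.1 p.2 := by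
  refine Prod.ext ?_ (Prod.ext ?_ (Prod.ext ?_ ?_))
  · simp [eU2, Prod.fst_sum, Prod.snd_sum]
  · simp [eU2, Prod.fst_sum, Prod.snd_sum]
  · simp [eU2, Prod.fst_sum, Prod.snd_sum]
  · funext K β
    simp only [eU2, Prod.fst_sum, Prod.snd_sum, Prod.smul_mk, smul_zero]
    rw [Fintype.sum_prod_type]
    simp [Finset.sum_apply, Pi.single_apply, apply_ite (fun f : Fin n → ℝ => f β),
      smul_eq_mul]

end AuxProof

/-- if the restricted Legendre map is a submersion at `a`, then the Hessian
of `L` with respect to the highest-order velocities is invertible at the underlying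
second-order jet point. -/
theorem statement5 (m n : ℕ) (L : J2 m n → ℝ) (hL : ContDiff ℝ (⊤ : ℕ∞) L)
    (a : J3 m n)
    (hsub : Function.Surjective ⇑(fderiv ℝ (FLmap L) a)) :
    (Hess L (π32 a)).det ≠ 0 := by
  classical
  set b := π32 a with hb
  set D := fderiv ℝ (FLmap L) a with hDdef
  have hFL : ContDiff ℝ (⊤:ℕ∞) (FLmap L) := contDiff_FLmap hL
  have hD : HasFDerivAt (FLmap L) D a := (hFL.differentiable (by simp) a).hasFDerivAt
  have h1 : ∀ v : J3 m n, (D v).1 = v.1 := by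
    intro v
    have hc := hD.fst
    have hc' : HasFDerivAt (fun w : J3 m n => (FLmap L w).1)
        (ContinuousLinearMap.fst ℝ (Fin m → ℝ) _) a := hasFDerivAt_fst
    exact DFunLike.congr_fun (hc.unique hc') v
  have h2 : ∀ v : J3 m n, (D v).2.1 = v.2.1 := by
    intro v
    have hc := hD.snd.fst
    have hc' : HasFDerivAt (fun w : J3 m n => (FLmap L w).2.1)
        ((ContinuousLinearMap.fst ℝ _ _).comp (ContinuousLinearMap.snd ℝ _ _)) a :=
      show HasFDerivAt (fun w : J3 m n => w.2.1) _ a from hasFDerivAt_snd.fst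
    exact DFunLike.congr_fun (hc.unique hc') v
  have h3 : ∀ v : J3 m n, (D v).2.2.1 = v.2.2.1 := by
    intro v
    have hc := hD.snd.snd.fst
    have hc' : HasFDerivAt (fun w : J3 m n => (FLmap L w).2.2.1)
        ((ContinuousLinearMap.fst ℝ _ _).comp ((ContinuousLinearMap.snd ℝ _ _).comp
          (ContinuousLinearMap.snd ℝ _ _))) a :=
      show HasFDerivAt (fun w : J3 m n => w.2.2.1) _ a from hasFDerivAt_snd.snd.fst
    exact DFunLike.congr_fun (hc.unique hc') v
  have h5 : ∀ (q : Idx m 2 × Fin n) (v : J3 m n),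
      (D v).2.2.2.2 q.1 q.2 = fderiv ℝ (dU2 q.1 q.2 L) b (π32 v) := by
    intro q v
    have hdiff : HasFDerivAt (dU2 q.1 q.2 L) (fderiv ℝ (dU2 q.1 q.2 L) b) b :=
      ((contDiff_dU2 q.1 q.2 hL).differentiable (by simp) b).hasFDerivAt
    have hA : HasFDerivAt (fun w : J3 m n => dU2 q.1 q.2 L (π32 w))
        ((fderiv ℝ (dU2 q.1 q.2 L) b).comp (π32L m n)) a :=
      by have h := hdiff.comp a (π32L m n).hasFDerivAt; exact h
    have hc := ((ContinuousLinearMap.proj (R := ℝ)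
        (φ := fun _ : Fin n => ℝ) q.2).hasFDerivAt).comp a
      (((ContinuousLinearMap.proj (R := ℝ)
        (φ := fun _ : Idx m 2 => (Fin n → ℝ)) q.1).hasFDerivAt).comp a hD.snd.snd.snd.snd)
    have heq := hc.unique hA
    exact DFunLike.congr_fun heq v
  have hlin : ∀ (q : Idx m 2 × Fin n) (c : (Idx m 2 × Fin n) → ℝ),
      fderiv ℝ (dU2 q.1 q.2 L) b ((0, 0, 0, fun K β => c (K, β)) : J2 m n)
        = ∑ p, c p * Hess L b p q := by
    intro q c
    rw [show (fun K β => c (K, β)) = fun K β => (fun p : Idx m 2 × Fin n => c p) (K, β) from rfl,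
      hdecomp, map_sum]
    simp [Hess, smul_eq_mul]
  have key : Function.Surjective fun c : (Idx m 2 × Fin n) → ℝ =>
      Matrix.vecMul c (Hess L b) := by
    intro r
    obtain ⟨v, hv⟩ := hsub (0, 0, 0, 0, fun I α => r (I, α))
    refine ⟨fun p => v.2.2.2.1 p.1 p.2, ?_⟩
    funext q
    have hv1 : v.1 = 0 := by rw [← h1 v, hv]
    have hv2 : v.2.1 = 0 := by rw [← h2 v, hv]
    have hv3 : v.2.2.1 = 0 := by rw [← h3 v, hv]
    have hπv : π32 v = ((0, 0, 0, v.2.2.2.1) : J2 m n) := by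
      unfold π32; rw [hv1, hv2, hv3]
    have h5' := h5 q v
    rw [hv, hπv] at h5'
    have : (fun I α => r (I, α)) q.1 q.2
        = fderiv ℝ (dU2 q.1 q.2 L) b ((0, 0, 0, v.2.2.2.1) : J2 m n) := h5'
    simp only at this
    show Matrix.vecMul (fun p => v.2.2.2.1 p.1 p.2) (Hess L b) q = r q
    simp only [Matrix.vecMul, dotProduct]
    rw [← hlin q (fun p => v.2.2.2.1 p.1 p.2)]
    exact this.symm
  have hunit : IsUnit (Hess L b) := Matrix.vecMul_surjective_iff_isUnit.mp key
  have hdet := (Matrix.isUnit_iff_isUnit_det _).mp hunit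
  simpa [isUnit_iff_ne_zero] using hdet
end
end

section
/- Let L be a second-order Lagrangian and φ : ℝ^m → ℝ^n a smooth map. Define along φ the Legendre momenta p^i_α := [∂L/∂u^α_i − Σ_{j=1}^m (1/n(ij)) D_j(∂L/∂u^α_{1_i+1_j})] ∘ j³φ and p^I_α := (∂L/∂u^α_I) ∘ j²φ (|I| = 2). Then: (a) the equations Σ_{j=1}^m (1/n(ij)) ∂p^{1_i+1_j}_α/∂x^j = (∂L/∂u^α_i) ∘ j²φ − p^i_α hold identically on ℝ^m for all i and α; and (b) the equations Σ_{i=1}^m ∂p^i_α/∂x^i = (∂L/∂u^α) ∘ j²φ hold on ℝ^m for all α if and only if φ satisfies the Euler–Lagrange field equations EL_α(φ) = 0 for every α. -/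
open scoped BigOperators

noncomputable section

namespace S6A

variable {m n : ℕ}

lemma hderiv : ((⊤:ℕ∞) : WithTop ℕ∞) + 1 ≤ ((⊤:ℕ∞) : WithTop ℕ∞) := by decide
lemma hone : (1 : WithTop ℕ∞) ≤ ((⊤:ℕ∞) : WithTop ℕ∞) := by decide
lemma htwo : (2 : WithTop ℕ∞) ≤ ((⊤:ℕ∞) : WithTop ℕ∞) := by decide

lemma contDiff_fderiv_apply {E F : Type*} [NormedAddCommGroup E] [NormedSpace ℝ E]
    [NormedAddCommGroup F] [NormedSpace ℝ F]
    {f : E → F} (hf : ContDiff ℝ (⊤:ℕ∞) f) (v : E) :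
    ContDiff ℝ (⊤:ℕ∞) fun x => fderiv ℝ f x v :=
  (hf.fderiv_right hderiv).clm_apply contDiff_const

variable {m : ℕ}

lemma contDiff_pd {f : (Fin m → ℝ) → ℝ} (hf : ContDiff ℝ (⊤:ℕ∞) f) (i : Fin m) :
    ContDiff ℝ (⊤:ℕ∞) (pd i f) :=
  contDiff_fderiv_apply hf _

lemma pd_comm {f : (Fin m → ℝ) → ℝ} (hf : ContDiff ℝ (⊤:ℕ∞) f) (i j : Fin m) :
    pd i (pd j f) = pd j (pd i f) := by
  funext x
  have hd : Differentiable ℝ (fderiv ℝ f) :=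
    (hf.fderiv_right hderiv).differentiable (by decide)
  have key : ∀ u w : Fin m → ℝ,
      fderiv ℝ (fun y => fderiv ℝ f y u) x w = fderiv ℝ (fderiv ℝ f) x w u := by
    intro u w
    rw [fderiv_clm_apply (hd x) (differentiableAt_const u)]
    simp
  show fderiv ℝ (fun y => fderiv ℝ f y (Pi.single j 1)) x (Pi.single i 1)
      = fderiv ℝ (fun y => fderiv ℝ f y (Pi.single i 1)) x (Pi.single j 1)
  rw [key, key]
  exact (hf.contDiffAt.isSymmSndFDerivAt (by simpa using htwo)).eq _ _

lemma contDiff_pd_iter {f : (Fin m → ℝ) → ℝ} (hf : ContDiff ℝ (⊤:ℕ∞) f) (i : Fin m) (k : ℕ) :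
    ContDiff ℝ (⊤:ℕ∞) ((pd i)^[k] f) := by
  induction k generalizing f with
  | zero => simpa using hf
  | succ k ih =>
      rw [Function.iterate_succ_apply]
      exact ih (contDiff_pd hf i)

lemma contDiff_foldr {f : (Fin m → ℝ) → ℝ} (hf : ContDiff ℝ (⊤:ℕ∞) f)
    (I : Fin m → ℕ) (l : List (Fin m)) :
    ContDiff ℝ (⊤:ℕ∞) (l.foldr (fun i g => (pd i)^[I i] g) f) := by
  induction l with
  | nil => simpa using hf
  | cons a l ih => exact contDiff_pd_iter ih a (I a)

lemma pd_iter_comm {f : (Fin m → ℝ) → ℝ} (hf : ContDiff ℝ (⊤:ℕ∞) f) (i j : Fin m) (k : ℕ) :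
    pd j ((pd i)^[k] f) = (pd i)^[k] (pd j f) := by
  induction k generalizing f with
  | zero => simp
  | succ k ih =>
      rw [Function.iterate_succ_apply, Function.iterate_succ_apply,
        ih (contDiff_pd hf i), pd_comm hf i j]

lemma pd_foldr {f : (Fin m → ℝ) → ℝ} (hf : ContDiff ℝ (⊤:ℕ∞) f)
    (I : Fin m → ℕ) (j : Fin m) (l : List (Fin m)) :
    pd j (l.foldr (fun i g => (pd i)^[I i] g) f)
      = l.foldr (fun i g => (pd i)^[I i] g) (pd j f) := by
  induction l with
  | nil => rfl
  | cons a l ih =>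
      show pd j ((pd a)^[I a] (l.foldr _ f)) = (pd a)^[I a] (l.foldr _ (pd j f))
      rw [pd_iter_comm (contDiff_foldr hf I l) a j (I a), ih]

lemma foldr_congr {f : (Fin m → ℝ) → ℝ} {I J : Fin m → ℕ} (l : List (Fin m))
    (h : ∀ i ∈ l, I i = J i) :
    l.foldr (fun i g => (pd i)^[I i] g) f = l.foldr (fun i g => (pd i)^[J i] g) f := by
  induction l with
  | nil => rfl
  | cons a l ih =>
      show (pd a)^[I a] _ = (pd a)^[J a] _
      rw [h a List.mem_cons_self, ih fun i hi => h i (List.mem_cons_of_mem a hi)]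

lemma foldr_add_single {f : (Fin m → ℝ) → ℝ} (hf : ContDiff ℝ (⊤:ℕ∞) f)
    (I : Fin m → ℕ) (j : Fin m) (l : List (Fin m)) (hjl : j ∈ l) (hnd : l.Nodup) :
    l.foldr (fun i g => (pd i)^[(I + Pi.single j 1 : Fin m → ℕ) i] g) f
      = l.foldr (fun i g => (pd i)^[I i] g) (pd j f) := by
  induction l with
  | nil => simp at hjl
  | cons a l ih =>
      rcases List.nodup_cons.1 hnd with ⟨hal, hnd'⟩
      rcases List.mem_cons.1 hjl with rfl | hjl'
      · show (pd j)^[(I + Pi.single j 1 : Fin m → ℕ) j] (l.foldr _ f) = (pd j)^[I j] (l.foldr _ (pd j f))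
        have h1 : l.foldr (fun i g => (pd i)^[(I + Pi.single j 1 : Fin m → ℕ) i] g) f
            = l.foldr (fun i g => (pd i)^[I i] g) f := by
          apply foldr_congr
          intro i hi
          have hij : i ≠ j := fun h => hal (h ▸ hi)
          simp [Pi.single_apply, hij]
        rw [h1]
        have h2 : (I + Pi.single j 1 : Fin m → ℕ) j = I j + 1 := by simp
        rw [h2, Function.iterate_succ_apply, pd_foldr hf I j l]
      · have haj : a ≠ j := fun h => hal (h ▸ hjl')
        show (pd a)^[(I + Pi.single j 1 : Fin m → ℕ) a] (l.foldr _ f) = (pd a)^[I a] (l.foldr _ (pd j f))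
        have h2 : (I + Pi.single j 1 : Fin m → ℕ) a = I a := by simp [Pi.single_apply, haj]
        rw [h2, ih hjl' hnd']

lemma pdI_add_single {f : (Fin m → ℝ) → ℝ} (hf : ContDiff ℝ (⊤:ℕ∞) f)
    (I : Fin m → ℕ) (j : Fin m) :
    pdI (I + Pi.single j 1) f = pd j (pdI I f) := by
  rw [pdI, pdI, foldr_add_single hf I j _ (List.mem_finRange j) (List.nodup_finRange m),
    pd_foldr hf I j]

lemma pdI_zero (f : (Fin m → ℝ) → ℝ) : pdI (0 : Fin m → ℕ) f = f := by
  show (List.finRange m).foldr _ f = f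
  induction List.finRange m with
  | nil => rfl
  | cons a l ih => simpa using ih

lemma pdI_single {f : (Fin m → ℝ) → ℝ} (hf : ContDiff ℝ (⊤:ℕ∞) f) (i : Fin m) :
    pdI (Pi.single i 1) f = pd i f := by
  have : (Pi.single i 1 : Fin m → ℕ) = 0 + Pi.single i 1 := by simp
  rw [this, pdI_add_single hf, pdI_zero]

lemma contDiff_pdI {f : (Fin m → ℝ) → ℝ} (hf : ContDiff ℝ (⊤:ℕ∞) f) (I : Fin m → ℕ) :
    ContDiff ℝ (⊤:ℕ∞) (pdI I f) :=
  contDiff_foldr hf I _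

lemma idx2_comm (i j : Fin m) : idx2 i j = idx2 j i :=
  Subtype.ext (add_comm _ _)

lemma single_eq_single {a b : Fin m} (h : (Pi.single a 1 : Fin m → ℕ) = Pi.single b 1) :
    a = b := by
  by_contra hab
  have := congrFun h a
  simp [Pi.single_apply, hab] at this

lemma single_of_sum_eq_one {f : Fin m → ℕ} (h : ∑ k, f k = 1) :
    ∃ j, f = Pi.single j 1 := by
  have hex : ∃ j, 1 ≤ f j := by
    by_contra hc
    push_neg at hc
    have : ∑ k, f k = 0 := Finset.sum_eq_zero fun k _ => by have := hc k; omega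
    omega
  obtain ⟨j, hj⟩ := hex
  refine ⟨j, funext fun k => ?_⟩
  have hrest : ∑ k ∈ Finset.univ.erase j, f k = 0 := by
    have := Finset.add_sum_erase Finset.univ f (Finset.mem_univ j)
    omega
  rcases eq_or_ne k j with rfl | hkj
  · have hle : f k ≤ ∑ i, f i :=
      Finset.single_le_sum (fun _ _ => Nat.zero_le _) (Finset.mem_univ k)
    simp only [Pi.single_eq_same]
    omega
  · have hk0 : f k = 0 := by
      have hk : k ∈ Finset.univ.erase j := Finset.mem_erase.2 ⟨hkj, Finset.mem_univ k⟩
      exact (Finset.sum_eq_zero_iff).1 hrest k hk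
    simp [Pi.single_apply, hkj, hk0]

lemma idx2_surj (I : Idx m 2) : ∃ i j, I = idx2 i j := by
  have h2 : ∑ k, I.1 k = 2 := I.2
  have hex : ∃ i, 1 ≤ I.1 i := by
    by_contra hc
    push_neg at hc
    have : ∑ k, I.1 k = 0 := Finset.sum_eq_zero fun k _ => by have := hc k; omega
    omega
  obtain ⟨i, hi⟩ := hex
  have hsle : ∀ k, (Pi.single i 1 : Fin m → ℕ) k ≤ I.1 k := by
    intro k
    rcases eq_or_ne k i with rfl | hki
    · simpa using hi
    · simp [Pi.single_apply, hki]
  have hgsum : ∑ k, (I.1 k - (Pi.single i 1 : Fin m → ℕ) k) = 1 := by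
    rw [Finset.sum_tsub_distrib Finset.univ (fun k _ => hsle k), h2,
      Finset.sum_pi_single']
    simp
  obtain ⟨j, hj⟩ := single_of_sum_eq_one hgsum
  refine ⟨i, j, Subtype.ext ?_⟩
  funext k
  have h1 := congrFun hj k
  have hsk := hsle k
  show I.1 k = (Pi.single i 1 + Pi.single j 1 : Fin m → ℕ) k
  simp only [Pi.add_apply]
  omega

lemma idx2_eq_iff {i j k l : Fin m} :
    idx2 k l = idx2 i j ↔ (k = i ∧ l = j) ∨ (k = j ∧ l = i) := by
  constructor
  · intro h
    have h' : (Pi.single k 1 + Pi.single l 1 : Fin m → ℕ)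
        = Pi.single i 1 + Pi.single j 1 := congrArg Subtype.val h
    rcases eq_or_ne k i with rfl | hki
    · have hs : (Pi.single l 1 : Fin m → ℕ) = Pi.single j 1 := by
        rwa [add_right_inj] at h'
      exact Or.inl ⟨rfl, single_eq_single hs⟩
    · have hk := congrFun h' k
      simp only [Pi.add_apply, Pi.single_apply, if_pos rfl] at hk
      rw [if_neg hki] at hk
      have hkj : k = j := by
        by_contra hc
        rw [if_neg hc] at hk
        split_ifs at hk <;> omega
      subst hkj
      have hs : (Pi.single l 1 : Fin m → ℕ) = Pi.single i 1 := by
        have h'' : (Pi.single k 1 + Pi.single l 1 : Fin m → ℕ)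
            = Pi.single k 1 + Pi.single i 1 := by rw [h', add_comm]
        rwa [add_right_inj] at h''
      exact Or.inr ⟨rfl, single_eq_single hs⟩
  · rintro (⟨rfl, rfl⟩ | ⟨rfl, rfl⟩)
    · rfl
    · exact idx2_comm k l

lemma sum_pairs (F : Idx m 2 → ℝ) :
    ∑ i, ∑ j, (nij i j)⁻¹ * F (idx2 i j) = ∑ I : Idx m 2, F I := by
  have h0 : ∑ p : Fin m × Fin m, (nij p.1 p.2)⁻¹ * F (idx2 p.1 p.2)
      = ∑ i, ∑ j, (nij i j)⁻¹ * F (idx2 i j) := Fintype.sum_prod_type _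
  rw [← h0,
    ← Finset.sum_fiberwise_of_maps_to (g := fun p : Fin m × Fin m => idx2 p.1 p.2)
      (t := Finset.univ) (fun p _ => Finset.mem_univ _)
      (fun p : Fin m × Fin m => (nij p.1 p.2)⁻¹ * F (idx2 p.1 p.2))]
  apply Finset.sum_congr rfl
  intro I _
  obtain ⟨i, j, rfl⟩ := idx2_surj I
  have hfilter : Finset.univ.filter (fun p : Fin m × Fin m => idx2 p.1 p.2 = idx2 i j)
      = {(i, j), (j, i)} := by
    ext p
    simp [idx2_eq_iff, Prod.ext_iff]
  rw [hfilter]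
  rcases eq_or_ne i j with rfl | hij
  · simp [nij]
  · rw [Finset.sum_pair (by simp [Prod.ext_iff]; tauto)]
    have h2 : nij i j = 2 := if_neg hij
    have h2' : nij j i = 2 := if_neg (Ne.symm hij)
    simp only [h2, h2', ← idx2_comm i j]
    ring

lemma vec_decomp (j : Fin m) (v1 : Fin n → ℝ) (v2 : Fin m → Fin n → ℝ)
    (v3 : Idx m 2 → Fin n → ℝ) :
    ((Pi.single j 1, v1, v2, v3) : J2 m n)
      = eX j + (∑ α, v1 α • eU α) + (∑ i, ∑ α, v2 i α • eU1 i α)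
        + (∑ I : Idx m 2, ∑ α, v3 I α • eU2 I α) := by
  refine Prod.ext ?_ (Prod.ext ?_ (Prod.ext ?_ ?_))
  · simp [eX, eU, eU1, eU2, Prod.fst_sum]
  · simp only [eX, eU, eU1, eU2, Prod.snd_add, Prod.fst_add, Prod.snd_sum, Prod.fst_sum,
      Prod.smul_snd, Prod.smul_fst, smul_zero, Finset.sum_const_zero, add_zero, zero_add]
    funext β
    simp [Finset.sum_apply, Pi.single_apply]
  · simp only [eX, eU, eU1, eU2, Prod.snd_add, Prod.fst_add, Prod.snd_sum, Prod.fst_sum,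
      Prod.smul_snd, Prod.smul_fst, smul_zero, Finset.sum_const_zero, add_zero, zero_add]
    funext i β
    simp [Finset.sum_apply, Pi.single_apply, ite_apply, Finset.sum_ite_eq, Finset.sum_ite_eq']
  · simp only [eX, eU, eU1, eU2, Prod.snd_add, Prod.snd_sum, Prod.smul_snd, smul_zero,
      Finset.sum_const_zero, add_zero, zero_add]
    funext I β
    simp [Finset.sum_apply, Pi.single_apply, ite_apply, Finset.sum_ite_eq, Finset.sum_ite_eq']

lemma clm_decomp (T : J2 m n →L[ℝ] ℝ) (j : Fin m) (v1 : Fin n → ℝ)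
    (v2 : Fin m → Fin n → ℝ) (v3 : Idx m 2 → Fin n → ℝ) :
    T ((Pi.single j 1, v1, v2, v3) : J2 m n)
      = T (eX j) + (∑ α, v1 α * T (eU α)) + (∑ i, ∑ α, v2 i α * T (eU1 i α))
        + (∑ I : Idx m 2, ∑ α, v3 I α * T (eU2 I α)) := by
  rw [vec_decomp j v1 v2 v3]
  simp [map_add, map_sum, map_smul, smul_eq_mul]

lemma contDiff_comp_phi {φ : (Fin m → ℝ) → Fin n → ℝ} (hφ : ContDiff ℝ (⊤:ℕ∞) φ)
    (α : Fin n) : ContDiff ℝ (⊤:ℕ∞) fun y => φ y α :=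
  (contDiff_pi.1 hφ) α

lemma contDiff_jet2 {φ : (Fin m → ℝ) → Fin n → ℝ} (hφ : ContDiff ℝ (⊤:ℕ∞) φ) :
    ContDiff ℝ (⊤:ℕ∞) (jet2 (m := m) (n := n) φ) := by
  refine ContDiff.prodMk contDiff_id (ContDiff.prodMk hφ (ContDiff.prodMk ?_ ?_))
  · exact contDiff_pi.2 fun i => contDiff_pi.2 fun α => contDiff_pd (contDiff_comp_phi hφ α) i
  · exact contDiff_pi.2 fun I => contDiff_pi.2 fun α => contDiff_pdI (contDiff_comp_phi hφ α) I.1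

lemma contDiff_comp_jet2 {G : J2 m n → ℝ} (hG : ContDiff ℝ (⊤:ℕ∞) G)
    {φ : (Fin m → ℝ) → Fin n → ℝ} (hφ : ContDiff ℝ (⊤:ℕ∞) φ) :
    ContDiff ℝ (⊤:ℕ∞) fun y => G (jet2 φ y) :=
  hG.comp (contDiff_jet2 hφ)

lemma pd_comp_jet2 {G : J2 m n → ℝ} (hG : ContDiff ℝ (⊤:ℕ∞) G)
    {φ : (Fin m → ℝ) → Fin n → ℝ} (hφ : ContDiff ℝ (⊤:ℕ∞) φ) (j : Fin m) (x : Fin m → ℝ) :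
    pd j (fun y => G (jet2 φ y)) x = totalD j G (jet3 φ x) := by
  classical
  have hφα : ∀ α, ContDiff ℝ (⊤:ℕ∞) fun y => φ y α := contDiff_comp_phi hφ
  -- the derivative of jet2 φ at x
  set D1 : (Fin m → ℝ) →L[ℝ] (Fin n → ℝ) :=
    ContinuousLinearMap.pi fun α => fderiv ℝ (fun y => φ y α) x with hD1
  set D2 : (Fin m → ℝ) →L[ℝ] (Fin m → Fin n → ℝ) :=
    ContinuousLinearMap.pi fun i => ContinuousLinearMap.pi fun α =>
      fderiv ℝ (pd i fun y => φ y α) x with hD2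
  set D3 : (Fin m → ℝ) →L[ℝ] (Idx m 2 → Fin n → ℝ) :=
    ContinuousLinearMap.pi fun I => ContinuousLinearMap.pi fun α =>
      fderiv ℝ (pdI I.1 fun y => φ y α) x with hD3
  set D : (Fin m → ℝ) →L[ℝ] J2 m n :=
    (ContinuousLinearMap.id ℝ (Fin m → ℝ)).prod (D1.prod (D2.prod D3)) with hD
  have hjet : HasFDerivAt (jet2 φ) D x := by
    refine HasFDerivAt.prodMk (hasFDerivAt_id x) (HasFDerivAt.prodMk ?_ (HasFDerivAt.prodMk ?_ ?_))
    · exact hasFDerivAt_pi.2 fun α =>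
        (((hφα α).differentiable (by decide)) x).hasFDerivAt
    · exact hasFDerivAt_pi.2 fun i => hasFDerivAt_pi.2 fun α =>
        (((contDiff_pd (hφα α) i).differentiable (by decide)) x).hasFDerivAt
    · exact hasFDerivAt_pi.2 fun I => hasFDerivAt_pi.2 fun α =>
        (((contDiff_pdI (hφα α) I.1).differentiable (by decide)) x).hasFDerivAt
  set T : J2 m n →L[ℝ] ℝ := fderiv ℝ G (jet2 φ x) with hT
  have hcomp : HasFDerivAt (fun y => G (jet2 φ y)) (T.comp D) x :=
    ((hG.differentiable (by decide) (jet2 φ x)).hasFDerivAt).comp x hjet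
  have hpd : pd j (fun y => G (jet2 φ y)) x = T (D (Pi.single j 1)) := by
    rw [pd, hcomp.fderiv]; rfl
  rw [hpd]
  have hDval : D (Pi.single j 1)
      = ((Pi.single j 1 : Fin m → ℝ),
          fun α => pd j (fun y => φ y α) x,
          fun i α => pd j (pd i fun y => φ y α) x,
          fun I α => pd j (pdI I.1 fun y => φ y α) x) := by
    rw [hD]
    refine Prod.ext ?_ (Prod.ext ?_ (Prod.ext ?_ ?_)) <;>
      simp [hD1, hD2, hD3, ContinuousLinearMap.pi_apply, pd]
  rw [hDval, clm_decomp]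
  -- now identify with totalD at jet3 φ x
  show _ = totalD j G (jet3 φ x)
  have hπ : π32 (jet3 φ x) = jet2 φ x := rfl
  rw [totalD, hπ]
  have e1 : ∀ α, (jet3 φ x).2.2.1 j α = pd j (fun y => φ y α) x := fun α => rfl
  have e2 : ∀ i α, (jet3 φ x).2.2.2.1 (idx2 i j) α = pd j (pd i fun y => φ y α) x := by
    intro i α
    show pdI (idx2 i j).1 (fun y => φ y α) x = _
    have : (idx2 i j).1 = Pi.single i 1 + Pi.single j 1 := rfl
    rw [this, pdI_add_single (hφα α), pdI_single (hφα α)]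
  have e3 : ∀ (I : Idx m 2) α,
      (jet3 φ x).2.2.2.2 (Idx.succ I j) α = pd j (pdI I.1 fun y => φ y α) x := by
    intro I α
    show pdI (Idx.succ I j).1 (fun y => φ y α) x = _
    have : (Idx.succ I j).1 = I.1 + Pi.single j 1 := rfl
    rw [this, pdI_add_single (hφα α)]
  simp only [e1, e2, e3]
  conv_rhs => rw [Finset.sum_comm (s := Finset.univ) (t := Finset.univ)
      (f := fun (α : Fin n) (i : Fin m) => pd j (pd i fun y => φ y α) x * dU1 i α G (jet2 φ x)),
    Finset.sum_comm (s := Finset.univ) (t := Finset.univ)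
      (f := fun (α : Fin n) (I : Idx m 2) => pd j (pdI I.1 fun y => φ y α) x * dU2 I α G (jet2 φ x))]
  rfl

lemma pd_sub {f g : (Fin m → ℝ) → ℝ} {x : Fin m → ℝ} (i : Fin m)
    (hf : DifferentiableAt ℝ f x) (hg : DifferentiableAt ℝ g x) :
    pd i (fun y => f y - g y) x = pd i f x - pd i g x := by
  simp only [pd]
  rw [fderiv_fun_sub hf hg]
  rfl

lemma pd_sum {ι : Type*} (s : Finset ι) {f : ι → (Fin m → ℝ) → ℝ} {x : Fin m → ℝ} (i : Fin m)
    (hf : ∀ b ∈ s, DifferentiableAt ℝ (f b) x) :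
    pd i (fun y => ∑ b ∈ s, f b y) x = ∑ b ∈ s, pd i (f b) x := by
  simp only [pd]
  rw [fderiv_fun_sum hf]
  simp

lemma pd_const_mul {f : (Fin m → ℝ) → ℝ} {x : Fin m → ℝ} (i : Fin m) (c : ℝ)
    (hf : DifferentiableAt ℝ f x) :
    pd i (fun y => c * f y) x = c * pd i f x := by
  simp only [pd]
  rw [fderiv_const_mul hf]
  rfl

lemma contDiff_dU1 {L : J2 m n → ℝ} (hL : ContDiff ℝ (⊤:ℕ∞) L) (i : Fin m) (α : Fin n) :
    ContDiff ℝ (⊤:ℕ∞) (dU1 i α L) := contDiff_fderiv_apply hL _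

lemma contDiff_dU2 {L : J2 m n → ℝ} (hL : ContDiff ℝ (⊤:ℕ∞) L) (I : Idx m 2) (α : Fin n) :
    ContDiff ℝ (⊤:ℕ∞) (dU2 I α L) := contDiff_fderiv_apply hL _

end S6A

/-- (a) the second family of unified field equations holds identically for
the Legendre momenta along `φ`; (b) the first family holds iff `φ` satisfies the
Euler–Lagrange field equations. -/
theorem statement6 (m n : ℕ) (L : J2 m n → ℝ) (hL : ContDiff ℝ (⊤ : ℕ∞) L)
    (φ : (Fin m → ℝ) → Fin n → ℝ) (hφ : ContDiff ℝ (⊤ : ℕ∞) φ) :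
    (∀ (i : Fin m) (α : Fin n) (x : Fin m → ℝ),
      (∑ j, (nij i j)⁻¹ * pd j (fun y => dU2 (idx2 i j) α L (jet2 φ y)) x)
        = dU1 i α L (jet2 φ x) - FLp1 L i α (jet3 φ x)) ∧
    ((∀ (α : Fin n) (x : Fin m → ℝ),
        (∑ i, pd i (fun y => FLp1 L i α (jet3 φ y)) x) = dU α L (jet2 φ x))
      ↔ ∀ (α : Fin n) (x : Fin m → ℝ), EL L φ α x = 0) := by
  have key : ∀ (I : Idx m 2) (α : Fin n) (j : Fin m) (x : Fin m → ℝ),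
      pd j (fun y => dU2 I α L (jet2 φ y)) x = totalD j (dU2 I α L) (jet3 φ x) :=
    fun I α j x => S6A.pd_comp_jet2 (S6A.contDiff_dU2 hL I α) hφ j x
  have parta : ∀ (i : Fin m) (α : Fin n) (x : Fin m → ℝ),
      (∑ j, (nij i j)⁻¹ * pd j (fun y => dU2 (idx2 i j) α L (jet2 φ y)) x)
        = dU1 i α L (jet2 φ x) - FLp1 L i α (jet3 φ x) := by
    intro i α x
    simp only [FLp1]
    have hπ : π32 (jet3 φ x) = jet2 φ x := rfl
    rw [hπ, sub_sub_cancel]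
    exact Finset.sum_congr rfl fun j _ => by rw [key]
  refine ⟨parta, ?_⟩
  -- pointwise identity for part (b)
  have hb : ∀ (α : Fin n) (x : Fin m → ℝ),
      (∑ i, pd i (fun y => FLp1 L i α (jet3 φ y)) x)
        = dU α L (jet2 φ x) - EL L φ α x := by
    intro α x
    have hFL : ∀ i, (fun y => FLp1 L i α (jet3 φ y))
        = fun y => dU1 i α L (jet2 φ y)
            - ∑ j, (nij i j)⁻¹ * pd j (fun z => dU2 (idx2 i j) α L (jet2 φ z)) y := by
      intro i
      funext y
      simp only [FLp1]
      have hπ : π32 (jet3 φ y) = jet2 φ y := rfl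
      rw [hπ]
      congr 1
      exact Finset.sum_congr rfl fun j _ => by rw [key]
    have hdiff1 : ∀ (i : Fin m) (y : Fin m → ℝ),
        DifferentiableAt ℝ (fun z => dU1 i α L (jet2 φ z)) y := fun i y =>
      ((S6A.contDiff_comp_jet2 (S6A.contDiff_dU1 hL i α) hφ).differentiable (by decide)) y
    have hdiff2 : ∀ (i j : Fin m) (y : Fin m → ℝ),
        DifferentiableAt ℝ (fun z => pd j (fun z' => dU2 (idx2 i j) α L (jet2 φ z')) z) y :=
      fun i j y =>
      ((S6A.contDiff_pd (S6A.contDiff_comp_jet2 (S6A.contDiff_dU2 hL (idx2 i j) α) hφ) j).differentiable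
        (by decide)) y
    have step : ∀ i, pd i (fun y => FLp1 L i α (jet3 φ y)) x
        = pd i (fun y => dU1 i α L (jet2 φ y)) x
          - ∑ j, (nij i j)⁻¹ *
              pd i (fun y => pd j (fun z => dU2 (idx2 i j) α L (jet2 φ z)) y) x := by
      intro i
      rw [hFL i]
      rw [S6A.pd_sub i (hdiff1 i x) ?hsum]
      case hsum =>
        apply DifferentiableAt.fun_sum
        intro j _
        exact (differentiableAt_const _).mul (hdiff2 i j x)
      congr 1
      rw [S6A.pd_sum (f := fun j y => (nij i j)⁻¹ * pd j (fun z => dU2 (idx2 i j) α L (jet2 φ z)) y) Finset.univ i fun j _ => (differentiableAt_const _).mul (hdiff2 i j x)]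
      exact Finset.sum_congr rfl fun j _ => S6A.pd_const_mul i _ (hdiff2 i j x)
    calc ∑ i, pd i (fun y => FLp1 L i α (jet3 φ y)) x
        = ∑ i, (pd i (fun y => dU1 i α L (jet2 φ y)) x
            - ∑ j, (nij i j)⁻¹ *
                pd i (fun y => pd j (fun z => dU2 (idx2 i j) α L (jet2 φ z)) y) x) :=
          Finset.sum_congr rfl fun i _ => step i
      _ = (∑ i, pd i (fun y => dU1 i α L (jet2 φ y)) x)
            - ∑ i, ∑ j, (nij i j)⁻¹ *
                pd i (fun y => pd j (fun z => dU2 (idx2 i j) α L (jet2 φ z)) y) x := by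
          rw [Finset.sum_sub_distrib]
      _ = (∑ i, pd i (fun y => dU1 i α L (jet2 φ y)) x)
            - ∑ I : Idx m 2, pdI I.1 (fun y => dU2 I α L (jet2 φ y)) x := by
          congr 1
          have hsw : ∀ i j : Fin m,
              pd i (fun y => pd j (fun z => dU2 (idx2 i j) α L (jet2 φ z)) y) x
                = pdI (idx2 i j).1 (fun y => dU2 (idx2 i j) α L (jet2 φ y)) x := by
            intro i j
            have hsm : ContDiff ℝ (⊤:ℕ∞) fun y => dU2 (idx2 i j) α L (jet2 φ y) :=
              S6A.contDiff_comp_jet2 (S6A.contDiff_dU2 hL (idx2 i j) α) hφ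
            have h1 : (idx2 i j).1 = Pi.single i 1 + Pi.single j 1 := rfl
            rw [h1, S6A.pdI_add_single hsm, S6A.pdI_single hsm, S6A.pd_comm hsm i j]
          rw [Finset.sum_congr rfl fun i _ => Finset.sum_congr rfl fun j _ => by rw [hsw i j]]
          exact S6A.sum_pairs fun I => pdI I.1 (fun y => dU2 I α L (jet2 φ y)) x
      _ = dU α L (jet2 φ x) - EL L φ α x := by
          simp only [EL]
          ring
  constructor
  · intro h α x
    have := hb α x
    rw [h α x] at this
    linarith
  · intro h α x
    rw [hb α x, h α x]
    ring
end
end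

section
/- Let m, n ≥ 1 and let V := ℝ^m × ℝ^n × (ℝ^n)^m × ℝ × (ℝ^n)^m × (ℝ^n)^{s₂} be the real vector space with standard basis vectors e_{x^i}, e_{u^α}, e_{u^α_i}, e_p, e_{p^i_α}, e_{p^I_α} (|I| = 2) and corresponding dual basis covectors dx^i, du^α, du^α_i, dp, dp^i_α, dp^I_α. Set d^m x := dx^1 ∧ ⋯ ∧ dx^m and d^{m−1}x_i := ι_{e_{x^i}} d^m x, and define the alternating (m+1)-form on V: Ω := −dp ∧ d^m x − Σ_{α,i} dp^i_α ∧ du^α ∧ d^{m−1}x_i − Σ_{α,i,j} (1/n(ij)) dp^{1_i+1_j}_α ∧ du^α_i ∧ d^{m−1}x_j. Then Ω is 1-nondegenerate: for v ∈ V, if the interior product ι_v Ω is the zero alternating m-form, then v = 0. (This is the pointwise statement that the symmetrized Liouville (m+1)-form on the extended 2-symmetric multimomentum bundle is multisymplectic.) -/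
open scoped BigOperators

set_option synthInstance.maxHeartbeats 1000000
set_option maxHeartbeats 1000000

noncomputable section

/-- The model vector space `V = ℝ^m × ℝ^n × (ℝ^n)^m × ℝ × (ℝ^n)^m × (ℝ^n)^{s₂}`, with
coordinates `(xⁱ, uᵅ, uᵅᵢ, p, pⁱᵅ, p^Iᵅ)`. -/
abbrev Vph (m n : ℕ) : Type :=
  (Fin m → ℝ) × (Fin n → ℝ) × (Fin m → Fin n → ℝ) × ℝ × (Fin m → Fin n → ℝ) ×
    (Idx m 2 → Fin n → ℝ)

/-- The dual space of `V`, whose exterior algebra hosts the forms. -/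
abbrev Dph (m n : ℕ) : Type := Module.Dual ℝ (Vph m n)

/-- The exterior algebra of the dual of `V`: alternating forms on `V`. -/
abbrev Eph (m n : ℕ) : Type := ExteriorAlgebra ℝ (Dph m n)

/-- The covector `dxⁱ`. -/
def dxF {m n : ℕ} (i : Fin m) : Dph m n :=
  ⟨⟨fun v => v.1 i, fun _ _ => rfl⟩, fun _ _ => rfl⟩
/-- The covector `duᵅ`. -/
def duF {m n : ℕ} (α : Fin n) : Dph m n :=
  ⟨⟨fun v => v.2.1 α, fun _ _ => rfl⟩, fun _ _ => rfl⟩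
/-- The covector `duᵅᵢ`. -/
def du1F {m n : ℕ} (i : Fin m) (α : Fin n) : Dph m n :=
  ⟨⟨fun v => v.2.2.1 i α, fun _ _ => rfl⟩, fun _ _ => rfl⟩
/-- The covector `dp`. -/
def dpF {m n : ℕ} : Dph m n :=
  ⟨⟨fun v => v.2.2.2.1, fun _ _ => rfl⟩, fun _ _ => rfl⟩
/-- The covector `dpⁱᵅ`. -/
def dp1F {m n : ℕ} (i : Fin m) (α : Fin n) : Dph m n :=
  ⟨⟨fun v => v.2.2.2.2.1 i α, fun _ _ => rfl⟩, fun _ _ => rfl⟩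
/-- The covector `dp^Iᵅ`. -/
def dp2F {m n : ℕ} (I : Idx m 2) (α : Fin n) : Dph m n :=
  ⟨⟨fun v => v.2.2.2.2.2 I α, fun _ _ => rfl⟩, fun _ _ => rfl⟩

/-- The basis vector `e_{xⁱ}` of `V`. -/
def basX {m n : ℕ} (i : Fin m) : Vph m n := (Pi.single i 1, 0, 0, 0, 0, 0)

/-- Inclusion of covectors into the exterior algebra. -/
def iotaD {m n : ℕ} (d : Dph m n) : Eph m n := ExteriorAlgebra.ι ℝ d

/-- Interior product (contraction) by the vector `v ∈ V` on forms. -/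
def ctr {m n : ℕ} (v : Vph m n) : Eph m n →ₗ[ℝ] Eph m n :=
  CliffordAlgebra.contractLeft (Module.Dual.eval ℝ (Vph m n) v)

/-- The volume form `d^m x = dx¹ ∧ ⋯ ∧ dxᵐ`. -/
def dmx (m n : ℕ) : Eph m n := (List.ofFn fun i : Fin m => iotaD (dxF i)).prod

/-- `d^{m−1}x_i = ι_{e_{xⁱ}} d^m x`. -/
def dm1x {m n : ℕ} (i : Fin m) : Eph m n := ctr (basX i) (dmx m n)

/-- The symmetrized Liouville `(m+1)`-form
`Ω = −dp ∧ d^m x − Σ dpⁱᵅ ∧ duᵅ ∧ d^{m−1}xᵢ − Σ (1/n(ij)) dp^{1ᵢ+1ⱼ}ᵅ ∧ duᵅᵢ ∧ d^{m−1}xⱼ`. -/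
def OmegaF (m n : ℕ) : Eph m n :=
  - (iotaD (dpF (m := m) (n := n)) * dmx m n)
    - (∑ α : Fin n, ∑ i : Fin m, iotaD (dp1F i α) * iotaD (duF α) * dm1x i)
    - ∑ α : Fin n, ∑ i : Fin m, ∑ j : Fin m,
        (nij i j)⁻¹ • (iotaD (dp2F (idx2 i j) α) * iotaD (du1F i α) * dm1x j)


section
variable {m n : ℕ}

namespace S9

def basU (α : Fin n) : Vph m n := (0, Pi.single α 1, 0, 0, 0, 0)
def basU1 (i : Fin m) (α : Fin n) : Vph m n := (0, 0, Pi.single i (Pi.single α 1), 0, 0, 0)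
def basP : Vph m n := (0, 0, 0, 1, 0, 0)
def basP1 (i : Fin m) (α : Fin n) : Vph m n := (0, 0, 0, 0, Pi.single i (Pi.single α 1), 0)
def basP2 (I : Idx m 2) (α : Fin n) : Vph m n := (0, 0, 0, 0, 0, Pi.single I (Pi.single α 1))

@[simp] lemma dxF_apply (i : Fin m) (u : Vph m n) : dxF i u = u.1 i := rfl
@[simp] lemma duF_apply (α : Fin n) (u : Vph m n) : duF α u = u.2.1 α := rfl
@[simp] lemma du1F_apply (i : Fin m) (α : Fin n) (u : Vph m n) : du1F i α u = u.2.2.1 i α := rfl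
@[simp] lemma dpF_apply (u : Vph m n) : dpF u = u.2.2.2.1 := rfl
@[simp] lemma dp1F_apply (i : Fin m) (α : Fin n) (u : Vph m n) : dp1F i α u = u.2.2.2.2.1 i α := rfl
@[simp] lemma dp2F_apply (I : Idx m 2) (α : Fin n) (u : Vph m n) : dp2F I α u = u.2.2.2.2.2 I α := rfl

lemma ctr_iota_mul (w : Vph m n) (f : Dph m n) (x : Eph m n) :
    ctr w (iotaD f * x) = f w • x - iotaD f * ctr w x :=
  CliffordAlgebra.contractLeft_ι_mul _ f x

lemma ctr_one (w : Vph m n) : ctr w (1 : Eph m n) = 0 :=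
  CliffordAlgebra.contractLeft_one _ _

lemma ctr_comm (w u : Vph m n) (x : Eph m n) : ctr w (ctr u x) = -ctr u (ctr w x) :=
  CliffordAlgebra.contractLeft_comm _ _ x

lemma ctr_prod_zero (w : Vph m n) :
    ∀ (fs : List (Dph m n)) (x : Eph m n), (∀ f ∈ fs, f w = 0) → ctr w x = 0 →
      ctr w ((fs.map iotaD).prod * x) = 0
  | [], x, _, hx => by simpa using hx
  | f :: fs, x, h, hx => by
      rw [List.map_cons, List.prod_cons, mul_assoc, ctr_iota_mul,
        h f (List.mem_cons_self), zero_smul, zero_sub,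
        ctr_prod_zero w fs x (fun g hg => h g (List.mem_cons_of_mem _ hg)) hx,
        mul_zero, neg_zero]

/-- Iterated contraction along a list of vectors. -/
def ctrl : List (Vph m n) → Eph m n →ₗ[ℝ] Eph m n
  | [] => LinearMap.id
  | w :: l => (ctrl l).comp (ctr w)

@[simp] lemma ctrl_nil (x : Eph m n) : ctrl [] x = x := rfl
@[simp] lemma ctrl_cons (w : Vph m n) (l : List (Vph m n)) (x : Eph m n) :
    ctrl (w :: l) x = ctrl l (ctr w x) := rfl

lemma dmx_eq : dmx m n = ((List.finRange m).map (fun i => iotaD (dxF (n := n) i))).prod := by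
  rw [dmx, List.ofFn_eq_map]

lemma ctrl_wedge : ∀ (l : List (Fin m)), l.Nodup → ∀ (x : Eph m n),
    (∀ i ∈ l, ctr (basX i) x = 0) →
    ctrl (l.map basX) ((l.map fun i => iotaD (dxF i)).prod * x) = x
  | [], _, x, _ => by simp
  | i :: l, hl, x, hx => by
      obtain ⟨hi, hl'⟩ := List.nodup_cons.mp hl
      rw [List.map_cons, List.map_cons, List.prod_cons, mul_assoc, ctrl_cons, ctr_iota_mul]
      have h1 : dxF (n := n) i (basX i) = 1 := by simp [basX]
      have h2 : ctr (basX i) ((l.map fun i => iotaD (dxF (n := n) i)).prod * x) = 0 := by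
        have := ctr_prod_zero (basX i) (l.map dxF) x ?_ (hx i (List.mem_cons_self))
        · simpa [List.map_map, Function.comp_def] using this
        · intro f hf
          obtain ⟨j, hj, rfl⟩ := List.mem_map.mp hf
          have hji : ¬ (i = j) := fun h => hi (h ▸ hj)
          simp [basX, Pi.single_apply, hji]
      rw [h2, mul_zero, sub_zero, h1, one_smul]
      exact ctrl_wedge l hl' x (fun j hj => hx j (List.mem_cons_of_mem _ hj))

/-- The list of all `basX` vectors. -/
def basList (m n : ℕ) : List (Vph m n) := (List.finRange m).map basX

lemma ctrl_basList_dmx : ctrl (basList m n) (dmx m n) = 1 := by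
  have := ctrl_wedge (n := n) (List.finRange m) (List.nodup_finRange m) 1
    (fun i _ => ctr_one _)
  simpa [dmx_eq, basList] using this

/-- Projection to scalars. -/
def Phi : Eph m n →ₗ[ℝ] ℝ := (ExteriorAlgebra.algebraMapInv).toLinearMap

@[simp] lemma Phi_one : Phi (1 : Eph m n) = 1 := map_one (ExteriorAlgebra.algebraMapInv)

lemma Phi_iota_mul (f : Dph m n) (x : Eph m n) : Phi (iotaD f * x) = 0 := by
  have h : Phi (iotaD f) = 0 := by
    show ExteriorAlgebra.algebraMapInv (ExteriorAlgebra.ι ℝ f) = 0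
    exact ExteriorAlgebra.lift_ι_apply (R := ℝ) (0 : Dph m n →ₗ[ℝ] ℝ) (fun _ => by simp) f
  calc Phi (iotaD f * x) = Phi (iotaD f) * Phi x :=
        map_mul (ExteriorAlgebra.algebraMapInv) _ _
    _ = 0 := by rw [h, zero_mul]

lemma Phi_ctrl_iota : ∀ (l : List (Vph m n)) (g : Dph m n), (∀ w ∈ l, g w = 0) →
    ∀ (y : Eph m n), Phi (ctrl l (iotaD g * y)) = 0
  | [], g, _, y => by simpa using Phi_iota_mul g y
  | w :: l, g, hg, y => by
      rw [ctrl_cons, ctr_iota_mul, hg w (List.mem_cons_self), zero_smul, zero_sub,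
        map_neg, map_neg]
      rw [Phi_ctrl_iota l g (fun u hu => hg u (List.mem_cons_of_mem _ hu)) (ctr w y), neg_zero]

lemma iota_dx_mul_ctr (i k : Fin m) :
    iotaD (dxF i) * ctr (basX k) (dmx m n) = ((Pi.single k 1 : Fin m → ℝ) i) • dmx m n := by
  have h0 : iotaD (dxF (n := n) i) * dmx m n = 0 := by
    simpa [dmx, iotaD] using
      ExteriorAlgebra.ι_mul_prod_list (R := ℝ) (fun j : Fin m => dxF (n := n) j) i
  have h := ctr_iota_mul (basX k) (dxF i) (dmx m n)
  rw [h0, map_zero] at h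
  have h2 : dxF (n := n) i (basX k) = (Pi.single k 1 : Fin m → ℝ) i := rfl
  rw [h2] at h
  exact (sub_eq_zero.mp h.symm).symm

lemma ctr_dmx_zero (u : Vph m n) (hu : u.1 = 0) : ctr u (dmx m n) = 0 := by
  have := ctr_prod_zero u ((List.finRange m).map dxF) 1 ?_ (ctr_one u)
  · simpa [dmx_eq, List.map_map, Function.comp_def] using this
  · intro f hf
    obtain ⟨j, _, rfl⟩ := List.mem_map.mp hf
    simp [hu]

end S9
end

section S9sec3
variable {m n : ℕ}
namespace S9

/-- The scalar functional extracting the coefficient of `d^m x`. -/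
def F0 (m n : ℕ) : Eph m n →ₗ[ℝ] ℝ := Phi ∘ₗ ctrl (basList m n)

/-- The scalar functional extracting coefficients of `(covector dual to u) ∧ d^{m-1}x_{i0}`. -/
def Fnl (u : Vph m n) (i0 : Fin m) : Eph m n →ₗ[ℝ] ℝ :=
  Phi ∘ₗ ctrl (basList m n) ∘ₗ LinearMap.mulLeft ℝ (iotaD (dxF i0)) ∘ₗ ctr u

lemma Fnl_apply (u : Vph m n) (i0 : Fin m) (x : Eph m n) :
    Fnl u i0 x = Phi (ctrl (basList m n) (iotaD (dxF i0) * ctr u x)) := rfl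

lemma basList_orth {g : Dph m n} (hg : ∀ k, g (basX k) = 0) :
    ∀ w ∈ basList m n, g w = 0 := by
  intro w hw
  obtain ⟨k, _, rfl⟩ := List.mem_map.mp hw
  exact hg k

lemma F0_dmx : F0 m n (dmx m n) = 1 := by
  rw [F0, LinearMap.comp_apply, ctrl_basList_dmx]; exact Phi_one

lemma F0_term (j : Fin m) (g : Dph m n) (hg : ∀ k, g (basX k) = 0) :
    F0 m n (ctr (basX j) (iotaD g * dmx m n)) = 0 := by
  rw [F0, LinearMap.comp_apply, ctr_iota_mul, hg j, zero_smul, zero_sub, map_neg, map_neg,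
    Phi_ctrl_iota (basList m n) g (basList_orth hg) (ctr (basX j) (dmx m n)), neg_zero]

lemma Fnl_dmx (u : Vph m n) (hu : u.1 = 0) (i0 : Fin m) : Fnl u i0 (dmx m n) = 0 := by
  rw [Fnl_apply, ctr_dmx_zero u hu, mul_zero, map_zero, map_zero]

lemma Fnl_term (u : Vph m n) (hu : u.1 = 0) (i0 j : Fin m) (g : Dph m n) :
    Fnl u i0 (ctr (basX j) (iotaD g * dmx m n))
      = -(g u * (Pi.single j 1 : Fin m → ℝ) i0) := by
  rw [Fnl_apply, ctr_comm u (basX j), ctr_iota_mul, ctr_dmx_zero u hu, mul_zero, sub_zero]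
  rw [map_smul, mul_neg, mul_smul_comm, iota_dx_mul_ctr]
  rw [smul_smul, map_neg, map_smul, ctrl_basList_dmx, map_neg, map_smul, Phi_one,
    smul_eq_mul, mul_one]

lemma ctrv_term (v : Vph m n) (f g : Dph m n) (hfx : ∀ k, f (basX k) = 0)
    (hgx : ∀ k, g (basX k) = 0) (j : Fin m) :
    ctr v (iotaD f * iotaD g * dm1x j) =
      -ctr (basX j) (f v • (iotaD g * dmx m n) - g v • (iotaD f * dmx m n)
        + iotaD f * (iotaD g * ctr v (dmx m n))) := by
  rw [mul_assoc]
  have h1 : iotaD f * (iotaD g * dm1x j)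
      = ctr (basX j) (iotaD f * (iotaD g * dmx m n)) := by
    rw [ctr_iota_mul, hfx j, zero_smul, zero_sub, ctr_iota_mul, hgx j, zero_smul, zero_sub,
      mul_neg, neg_neg, dm1x]
  rw [h1, ctr_comm, neg_inj]
  congr 1
  rw [ctr_iota_mul, ctr_iota_mul, mul_sub, mul_smul_comm]
  abel

lemma ctrv_T1 (v : Vph m n) :
    ctr v (iotaD (dpF (m := m) (n := n)) * dmx m n)
      = v.2.2.2.1 • dmx m n - iotaD dpF * ctr v (dmx m n) := by
  rw [ctr_iota_mul, dpF_apply]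

lemma ctr_basP_ctrv_dmx (v : Vph m n) : ctr basP (ctr v (dmx m n)) = 0 := by
  rw [ctr_comm, ctr_dmx_zero basP rfl, map_zero, neg_zero]

lemma ctrP_T1 (v : Vph m n) :
    ctr basP (ctr v (iotaD (dpF (m := m) (n := n)) * dmx m n)) = -ctr v (dmx m n) := by
  rw [ctrv_T1, map_sub, map_smul, ctr_dmx_zero basP rfl, smul_zero, zero_sub,
    ctr_iota_mul, ctr_basP_ctrv_dmx, mul_zero, sub_zero,
    show dpF (basP (m := m) (n := n)) = 1 from rfl, one_smul]

lemma ctrP_term (v : Vph m n) (f g : Dph m n) (hfx : ∀ k, f (basX k) = 0)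
    (hgx : ∀ k, g (basX k) = 0) (hfP : f basP = 0) (hgP : g basP = 0) (j : Fin m) :
    ctr basP (ctr v (iotaD f * iotaD g * dm1x j)) = 0 := by
  have e1 : ctr (basP (m := m) (n := n)) (iotaD g * dmx m n) = 0 := by
    rw [ctr_iota_mul, hgP, zero_smul, zero_sub, ctr_dmx_zero basP rfl, mul_zero, neg_zero]
  have e2 : ctr (basP (m := m) (n := n)) (iotaD f * dmx m n) = 0 := by
    rw [ctr_iota_mul, hfP, zero_smul, zero_sub, ctr_dmx_zero basP rfl, mul_zero, neg_zero]
  have e3 : ctr basP (iotaD f * (iotaD g * ctr v (dmx m n))) = 0 := by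
    rw [ctr_iota_mul, hfP, zero_smul, zero_sub, ctr_iota_mul, hgP, zero_smul, zero_sub,
      ctr_basP_ctrv_dmx, mul_zero, neg_zero, mul_zero, neg_zero]
  rw [ctrv_term v f g hfx hgx j, map_neg, ctr_comm]
  rw [map_add, map_sub, map_smul, map_smul, e1, e2, e3, smul_zero, smul_zero, sub_self,
    zero_add, map_zero]
  simp

lemma F0_t (v : Vph m n) (f g : Dph m n) (hfx : ∀ k, f (basX k) = 0)
    (hgx : ∀ k, g (basX k) = 0) (hZ : ctr v (dmx m n) = 0) (j : Fin m) :
    F0 m n (ctr v (iotaD f * iotaD g * dm1x j)) = 0 := by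
  rw [ctrv_term v f g hfx hgx j]
  simp only [hZ, mul_zero, add_zero, map_neg, map_sub, map_smul,
    F0_term j g hgx, F0_term j f hfx, smul_zero, sub_self, neg_zero]

lemma Fnl_t (v u : Vph m n) (hu : u.1 = 0) (f g : Dph m n) (hfx : ∀ k, f (basX k) = 0)
    (hgx : ∀ k, g (basX k) = 0) (hZ : ctr v (dmx m n) = 0) (j i0 : Fin m) :
    Fnl u i0 (ctr v (iotaD f * iotaD g * dm1x j))
      = (f v * g u - g v * f u) * (Pi.single j 1 : Fin m → ℝ) i0 := by
  rw [ctrv_term v f g hfx hgx j]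
  simp only [hZ, mul_zero, add_zero, map_neg, map_sub, map_smul,
    Fnl_term u hu i0 j g, Fnl_term u hu i0 j f, smul_eq_mul]
  ring

end S9
end S9sec3

section S9sec4
variable {m n : ℕ}
namespace S9

lemma iota_dx_ctrv (v : Vph m n) (i : Fin m) :
    iotaD (dxF i) * ctr v (dmx m n) = v.1 i • dmx m n := by
  have h0 : iotaD (dxF (n := n) i) * dmx m n = 0 := by
    simpa [dmx, iotaD] using
      ExteriorAlgebra.ι_mul_prod_list (R := ℝ) (fun j : Fin m => dxF (n := n) j) i
  have h := ctr_iota_mul v (dxF i) (dmx m n)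
  rw [h0, map_zero, dxF_apply] at h
  exact (sub_eq_zero.mp h.symm).symm

lemma a_zero (v : Vph m n) (hZ : ctr v (dmx m n) = 0) : v.1 = 0 := by
  funext i
  have h := iota_dx_ctrv v i
  rw [hZ, mul_zero] at h
  have h2 := congrArg (F0 m n) h
  rw [map_zero, map_smul, F0_dmx, smul_eq_mul, mul_one] at h2
  exact h2.symm

lemma Z_zero (v : Vph m n) (hv : ctr v (OmegaF m n) = 0) : ctr v (dmx m n) = 0 := by
  have h : ctr basP (ctr v (OmegaF m n)) = 0 := by rw [hv, map_zero]
  rw [OmegaF] at h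
  have hA : ∀ (α : Fin n) (i : Fin m),
      ctr basP (ctr v (iotaD (dp1F i α) * iotaD (duF α) * dm1x i)) = 0 := fun α i =>
    ctrP_term v _ _ (fun k => by simp [basX]) (fun k => by simp [basX])
      (by simp [basP]) (by simp [basP]) i
  have hB : ∀ (α : Fin n) (i j : Fin m),
      ctr basP (ctr v (iotaD (dp2F (idx2 i j) α) * iotaD (du1F i α) * dm1x j)) = 0 :=
    fun α i j =>
    ctrP_term v _ _ (fun k => by simp [basX]) (fun k => by simp [basX])
      (by simp [basP]) (by simp [basP]) j
  simp only [map_neg, map_sub, map_sum, map_smul, ctrP_T1, hA, hB, smul_zero,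
    Finset.sum_const_zero, sub_zero, neg_neg] at h
  exact h

lemma q_zero (v : Vph m n) (hZ : ctr v (dmx m n) = 0) (hv : ctr v (OmegaF m n) = 0) :
    v.2.2.2.1 = 0 := by
  have h : F0 m n (ctr v (OmegaF m n)) = 0 := by rw [hv, map_zero]
  rw [OmegaF] at h
  have h1 : F0 m n (ctr v (iotaD (dpF (m := m) (n := n)) * dmx m n)) = v.2.2.2.1 := by
    rw [ctrv_T1, hZ, mul_zero, sub_zero, map_smul, F0_dmx, smul_eq_mul, mul_one]
  have h2 : ∀ (α : Fin n) (i : Fin m),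
      F0 m n (ctr v (iotaD (dp1F i α) * iotaD (duF α) * dm1x i)) = 0 := fun α i =>
    F0_t v _ _ (fun k => by simp [basX]) (fun k => by simp [basX]) hZ i
  have h3 : ∀ (α : Fin n) (i j : Fin m),
      F0 m n (ctr v (iotaD (dp2F (idx2 i j) α) * iotaD (du1F i α) * dm1x j)) = 0 :=
    fun α i j =>
    F0_t v _ _ (fun k => by simp [basX]) (fun k => by simp [basX]) hZ j
  simp only [map_neg, map_sub, map_sum, map_smul, h1, h2, h3, smul_zero,
    Finset.sum_const_zero, sub_zero, neg_eq_zero] at h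
  exact h

lemma extract (v : Vph m n) (hZ : ctr v (dmx m n) = 0) (hv : ctr v (OmegaF m n) = 0)
    (u : Vph m n) (hu : u.1 = 0) (i0 : Fin m) :
    (∑ α : Fin n, ∑ i : Fin m,
        (dp1F i α v * duF α u - duF α v * dp1F i α u) * (Pi.single i 1 : Fin m → ℝ) i0)
      + ∑ α : Fin n, ∑ i : Fin m, ∑ j : Fin m, (nij i j)⁻¹ *
          ((dp2F (idx2 i j) α v * du1F i α u - du1F i α v * dp2F (idx2 i j) α u)
            * (Pi.single j 1 : Fin m → ℝ) i0) = 0 := by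
  have h : Fnl u i0 (ctr v (OmegaF m n)) = 0 := by rw [hv, map_zero]
  rw [OmegaF] at h
  have h1 : Fnl u i0 (ctr v (iotaD (dpF (m := m) (n := n)) * dmx m n)) = 0 := by
    rw [ctrv_T1, hZ, mul_zero, sub_zero, map_smul, Fnl_dmx u hu i0, smul_zero]
  have h2 : ∀ (α : Fin n) (i : Fin m),
      Fnl u i0 (ctr v (iotaD (dp1F i α) * iotaD (duF α) * dm1x i))
        = (dp1F i α v * duF α u - duF α v * dp1F i α u)
            * (Pi.single i 1 : Fin m → ℝ) i0 := fun α i =>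
    Fnl_t v u hu _ _ (fun k => by simp [basX]) (fun k => by simp [basX]) hZ i i0
  have h3 : ∀ (α : Fin n) (i j : Fin m),
      Fnl u i0 (ctr v (iotaD (dp2F (idx2 i j) α) * iotaD (du1F i α) * dm1x j))
        = (dp2F (idx2 i j) α v * du1F i α u - du1F i α v * dp2F (idx2 i j) α u)
            * (Pi.single j 1 : Fin m → ℝ) i0 := fun α i j =>
    Fnl_t v u hu _ _ (fun k => by simp [basX]) (fun k => by simp [basX]) hZ j i0
  simp only [map_neg, map_sub, map_sum, map_smul, h1, h2, h3, smul_eq_mul, neg_zero,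
    zero_sub, neg_sub] at h
  linarith [h]

lemma idx2_eq_diag_iff (i i0 : Fin m) : idx2 i i0 = idx2 i0 i0 ↔ i = i0 := by
  constructor
  · intro h
    by_contra hne
    have h2 := congrFun (congrArg Subtype.val h) i
    simp [idx2, Pi.single_apply, hne] at h2
  · rintro rfl; rfl

lemma idx2_surj (I : Idx m 2) : ∃ i j, I = idx2 i j := by
  obtain ⟨f, hf⟩ := I
  have h2 : ∑ k, f k = 2 := hf
  have hex : ∃ i, f i ≠ 0 := by
    by_contra hc
    push_neg at hc
    rw [Finset.sum_eq_zero (fun k _ => hc k)] at h2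
    omega
  obtain ⟨i, hi⟩ := hex
  have hle : f i ≤ 2 := h2 ▸ Finset.single_le_sum (f := f) (fun k _ => Nat.zero_le _)
    (Finset.mem_univ i)
  have hsplit : f i + ∑ k ∈ Finset.univ.erase i, f k = 2 := by
    rw [Finset.add_sum_erase _ f (Finset.mem_univ i)]
    exact h2
  rcases Nat.lt_or_ge (f i) 2 with h1 | h1
  · have hfi : f i = 1 := by omega
    have hrest : ∑ k ∈ Finset.univ.erase i, f k = 1 := by omega
    have hex2 : ∃ j ∈ Finset.univ.erase i, f j ≠ 0 := by
      by_contra hc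
      push_neg at hc
      rw [Finset.sum_eq_zero hc] at hrest
      omega
    obtain ⟨j, hjmem, hj⟩ := hex2
    have hji : j ≠ i := (Finset.mem_erase.mp hjmem).1
    have hlej : f j ≤ 1 := hrest ▸ Finset.single_le_sum (f := f)
      (fun k _ => Nat.zero_le _) hjmem
    have hfj : f j = 1 := by omega
    have hsum0 : ∑ l ∈ (Finset.univ.erase i).erase j, f l = 0 := by
      have h4 := Finset.add_sum_erase _ f hjmem
      omega
    have hzero : ∀ k, k ≠ i → k ≠ j → f k = 0 := by
      intro k hki hkj
      exact Finset.sum_eq_zero_iff.mp hsum0 k (by simp [hki, hkj])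
    refine ⟨i, j, Subtype.ext (funext fun k => ?_)⟩
    show f k = ((Pi.single i 1 + Pi.single j 1 : Fin m → ℕ)) k
    by_cases hk : k = i
    · subst hk
      simp [Pi.single_apply, Ne.symm hji, hfi]
    · by_cases hk2 : k = j
      · subst hk2
        simp [Pi.single_apply, hk, hfj]
      · simp [Pi.single_apply, hk, hk2, hzero k hk hk2]
  · have hfi : f i = 2 := by omega
    have hrest : ∑ k ∈ Finset.univ.erase i, f k = 0 := by omega
    have hzero : ∀ k, k ≠ i → f k = 0 := fun k hk =>
      Finset.sum_eq_zero_iff.mp hrest k (by simp [hk])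
    refine ⟨i, i, Subtype.ext (funext fun k => ?_)⟩
    show f k = ((Pi.single i 1 + Pi.single i 1 : Fin m → ℕ)) k
    by_cases hk : k = i
    · subst hk
      simp [Pi.single_apply, hfi]
    · simp [Pi.single_apply, hk, hzero k hk]

lemma nij_ne (i j : Fin m) : nij i j ≠ 0 := by
  rw [nij]
  split_ifs <;> norm_num

end S9
end S9sec4


/-- the form `Ω` is 1-nondegenerate: `ι_v Ω = 0` implies `v = 0`. -/
theorem statement9 (m n : ℕ) (hm : 0 < m) (hn : 0 < n) (v : Vph m n)
    (hv : ctr v (OmegaF m n) = 0) : v = 0 := by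
  have hZ : ctr v (dmx m n) = 0 := S9.Z_zero v hv
  have ha : v.1 = 0 := S9.a_zero v hZ
  have hq : v.2.2.2.1 = 0 := S9.q_zero v hZ hv
  have key := S9.extract v hZ hv
  have hr : ∀ (i0 : Fin m) (α0 : Fin n), v.2.2.2.2.1 i0 α0 = 0 := by
    intro i0 α0
    have h := key (S9.basU α0) rfl i0
    simp [S9.basU, Pi.single_apply, ite_apply, mul_ite, ite_mul, Finset.sum_ite_eq,
      Finset.sum_ite_eq'] at h
    exact h
  have hb : ∀ α0 : Fin n, v.2.1 α0 = 0 := by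
    intro α0
    have i0 : Fin m := ⟨0, hm⟩
    have h := key (S9.basP1 i0 α0) rfl i0
    simp [S9.basP1, Pi.single_apply, ite_apply, mul_ite, ite_mul, Finset.sum_ite_eq,
      Finset.sum_ite_eq'] at h
    exact h
  have hs : ∀ (I : Idx m 2) (α0 : Fin n), v.2.2.2.2.2 I α0 = 0 := by
    intro I α0
    obtain ⟨i1, j0, rfl⟩ := S9.idx2_surj I
    have h := key (S9.basU1 i1 α0) rfl j0
    simp [S9.basU1, Pi.single_apply, ite_apply, mul_ite, ite_mul, Finset.sum_ite_eq,
      Finset.sum_ite_eq'] at h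
    rcases h with h | h
    · exact absurd h (S9.nij_ne i1 j0)
    · exact h
  have hc : ∀ (i0 : Fin m) (α0 : Fin n), v.2.2.1 i0 α0 = 0 := by
    intro i0 α0
    have h := key (S9.basP2 (idx2 i0 i0) α0) rfl i0
    simp [S9.basP2, Pi.single_apply, ite_apply, mul_ite, ite_mul, Finset.sum_ite_eq,
      Finset.sum_ite_eq', S9.idx2_eq_diag_iff, nij] at h
    exact h
  obtain ⟨a, b, c, q, r, s⟩ := v
  simp only [Prod.mk_eq_zero]
  exact ⟨ha, funext hb, funext fun i => funext (hc i), hq,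
    funext fun i => funext (hr i), funext fun I => funext (hs I)⟩
end
end
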